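/- arXiv:2503.06904 — 6 statements merged into one kernel-verified Lean document; each statement's English description precedes it below -/
import Mathlib

section
/- For every real number a with 0 < a < 1, the improper integral ∫₀^∞ x^{a-1}/(1+x) dx converges and equals π·csc(aπ). -/
open MeasureTheory Real Set

lemma beta_real_aux (a : ℝ) (ha0 : 0 < a) (ha1 : a < 1) :
    IntegrableOn (fun x : ℝ => x ^ (a - 1) * (1 - x) ^ (-a)) (Ioo 0 1) ∧
    ∫ x in Ioo (0 : ℝ) 1, x ^ (a - 1) * (1 - x) ^ (-a) = π / Real.sin (π * a) := by
  have hu : (0 : ℝ) < (Complex.ofReal a).re := by simpa using ha0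
  have hv : (0 : ℝ) < (1 - (Complex.ofReal a)).re := by simp [ha1]
  have hconv := Complex.betaIntegral_convergent hu hv
  have hEq : ∀ x ∈ Ioo (0 : ℝ) 1,
      ((x : ℂ) ^ ((a : ℂ) - 1) * (1 - (x : ℂ)) ^ ((1 - (a : ℂ)) - 1)) =
        Complex.ofReal (x ^ (a - 1) * (1 - x) ^ (-a)) := by
    intro x hx
    have hx0 : (0 : ℝ) ≤ x := hx.1.le
    have hx1 : (0 : ℝ) ≤ 1 - x := by linarith [hx.2]
    have e1 : ((x : ℂ)) ^ ((a : ℂ) - 1) = Complex.ofReal (x ^ (a - 1)) := by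
      rw [Complex.ofReal_cpow hx0]; push_cast; ring_nf
    have e2 : (1 - (x : ℂ)) ^ ((1 - (a : ℂ)) - 1) = Complex.ofReal ((1 - x) ^ (-a)) := by
      rw [show (1 : ℂ) - (x : ℂ) = Complex.ofReal (1 - x) by push_cast; ring,
        Complex.ofReal_cpow hx1]
      push_cast; ring_nf
    rw [e1, e2, ← Complex.ofReal_mul]
  have hIoo : IntegrableOn (fun x : ℝ =>
      ((x : ℂ) ^ ((a : ℂ) - 1) * (1 - (x : ℂ)) ^ ((1 - (a : ℂ)) - 1))) (Ioo 0 1) := by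
    have := (intervalIntegrable_iff_integrableOn_Ioo_of_le (by norm_num : (0:ℝ) ≤ 1)).mp hconv
    exact this
  have hIooR : IntegrableOn (fun x : ℝ => x ^ (a - 1) * (1 - x) ^ (-a)) (Ioo 0 1) := by
    have h1 : IntegrableOn (fun x : ℝ =>
        Complex.ofReal (x ^ (a - 1) * (1 - x) ^ (-a))) (Ioo 0 1) := by
      refine hIoo.congr_fun hEq measurableSet_Ioo
    have h2 : IntegrableOn (fun x : ℝ =>
        Complex.re (Complex.ofReal (x ^ (a - 1) * (1 - x) ^ (-a)))) (Ioo 0 1) := h1.re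
    refine h2.congr_fun (fun x _ => by simp) measurableSet_Ioo
  refine ⟨hIooR, ?_⟩
  -- compute the value via the complex Beta function
  have hval : Complex.betaIntegral (a : ℂ) (1 - (a : ℂ)) = (π : ℂ) / Complex.sin (π * a) := by
    have h := Complex.Gamma_mul_Gamma_eq_betaIntegral hu hv
    rw [show (a : ℂ) + (1 - (a : ℂ)) = 1 by ring, Complex.Gamma_one, one_mul] at h
    rw [← h, Complex.Gamma_mul_Gamma_one_sub]
  have hint : Complex.betaIntegral (a : ℂ) (1 - (a : ℂ)) =
      Complex.ofReal (∫ x in Ioo (0 : ℝ) 1, x ^ (a - 1) * (1 - x) ^ (-a)) := by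
    rw [Complex.betaIntegral, intervalIntegral.integral_of_le (by norm_num : (0:ℝ) ≤ 1),
      MeasureTheory.integral_Ioc_eq_integral_Ioo,
      setIntegral_congr_fun measurableSet_Ioo hEq]
    exact integral_ofReal
  have hsin : Real.sin (π * a) ≠ 0 := by
    apply ne_of_gt
    apply Real.sin_pos_of_pos_of_lt_pi (by positivity)
    nlinarith [Real.pi_pos]
  have : Complex.ofReal (∫ x in Ioo (0 : ℝ) 1, x ^ (a - 1) * (1 - x) ^ (-a)) =
      Complex.ofReal (π / Real.sin (π * a)) := by
    rw [← hint, hval]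
    push_cast [Complex.ofReal_sin]
    ring
  exact_mod_cast this

theorem integral_rpow_div_one_add (a : ℝ) (ha0 : 0 < a) (ha1 : a < 1) :
    IntegrableOn (fun x : ℝ => x ^ (a - 1) / (1 + x)) (Ioi 0) ∧
    ∫ x in Ioi (0 : ℝ), x ^ (a - 1) / (1 + x) = π * (1 / Real.sin (a * π)) := by
  obtain ⟨hbint, hbval⟩ := beta_real_aux a ha0 ha1
  set f : ℝ → ℝ := fun x => x / (1 - x) with hf
  set f' : ℝ → ℝ := fun x => ((1 - x) ^ 2)⁻¹ with hf'
  have hderiv : ∀ x ∈ Ioo (0 : ℝ) 1, HasDerivWithinAt f (f' x) (Ioo 0 1) x := by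
    intro x hx
    have h1x : (1 : ℝ) - x ≠ 0 := by have := hx.2; intro h; nlinarith
    have : HasDerivAt f ((1 * (1 - x) - x * (0 - 1)) / (1 - x) ^ 2) x :=
      (hasDerivAt_id x).div ((hasDerivAt_const x 1).sub (hasDerivAt_id x)) h1x
    have h2 : (1 * (1 - x) - x * (0 - 1)) / (1 - x) ^ 2 = f' x := by
      simp only [hf']
      field_simp
      ring
    rw [h2] at this
    exact this.hasDerivWithinAt
  have hinj : InjOn f (Ioo 0 1) := by
    intro x hx y hy h
    have h1x : (1 : ℝ) - x ≠ 0 := by have := hx.2; intro hc; nlinarith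
    have h1y : (1 : ℝ) - y ≠ 0 := by have := hy.2; intro hc; nlinarith
    simp only [hf] at h
    field_simp at h
    nlinarith [h]
  have himg : f '' Ioo 0 1 = Ioi (0 : ℝ) := by
    ext y
    constructor
    · rintro ⟨x, hx, rfl⟩
      exact div_pos hx.1 (by linarith [hx.2])
    · intro hy
      refine ⟨y / (1 + y), ⟨div_pos hy (by linarith [mem_Ioi.mp hy]), ?_⟩, ?_⟩
      · rw [div_lt_one (by linarith [mem_Ioi.mp hy])]; linarith [mem_Ioi.mp hy]
      · have hy0 : (0 : ℝ) < y := hy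
        have h1y : (1 : ℝ) + y ≠ 0 := by positivity
        simp only [hf]
        rw [div_eq_iff]
        · field_simp
          ring
        · intro hc
          have : 1 - y / (1 + y) = (1 : ℝ) / (1 + y) := by field_simp; ring
          rw [this] at hc
          simp at hc
          exact h1y hc
  set g : ℝ → ℝ := fun x => x ^ (a - 1) / (1 + x) with hg
  have hkey : ∀ x ∈ Ioo (0 : ℝ) 1, |f' x| • g (f x) = x ^ (a - 1) * (1 - x) ^ (-a) := by
    intro x hx
    have hx0 : (0 : ℝ) < x := hx.1
    have h1x : (0 : ℝ) < 1 - x := by linarith [hx.2]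
    have hfpos : (0 : ℝ) < f' x := by positivity
    have h1fx : 1 + f x = (1 - x)⁻¹ := by
      simp only [hf]; field_simp; ring
    have hfx : f x ^ (a - 1) = x ^ (a - 1) * (1 - x) ^ (1 - a) := by
      simp only [hf]
      rw [Real.div_rpow hx0.le h1x.le, show (1:ℝ) - a = -(a-1) by ring,
        Real.rpow_neg h1x.le, div_eq_mul_inv]
    simp only [smul_eq_mul, hg]
    rw [abs_of_pos hfpos, h1fx, hfx]
    simp only [hf', inv_inv, div_inv_eq_mul]
    set y := 1 - x with hy
    have hA : y ^ (1 - a) * y = y ^ (2 - a) := by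
      nth_rewrite 2 [← Real.rpow_one y]
      rw [← Real.rpow_add h1x, show (1:ℝ) - a + 1 = 2 - a by ring]
    have hB : y ^ ((2:ℝ)) = y ^ (2:ℕ) := Real.rpow_two y
    have hC : y ^ ((2:ℝ)) ≠ 0 := by positivity
    calc (y ^ 2)⁻¹ * (x ^ (a - 1) * y ^ (1 - a) * y)
        = (y ^ ((2:ℝ)))⁻¹ * (x ^ (a - 1) * y ^ (2 - a)) := by
          rw [hB, mul_assoc, hA]
      _ = x ^ (a - 1) * y ^ (-a) := by
          rw [show (2:ℝ) - a = -a + 2 by ring, Real.rpow_add h1x]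
          field_simp
  have hmeas : MeasurableSet (Ioo (0:ℝ) 1) := measurableSet_Ioo
  have hInt : IntegrableOn g (Ioi 0) := by
    rw [← himg, integrableOn_image_iff_integrableOn_abs_deriv_smul hmeas hderiv hinj]
    exact hbint.congr_fun (fun x hx => (hkey x hx).symm) hmeas
  refine ⟨hInt, ?_⟩
  have := MeasureTheory.integral_image_eq_integral_abs_deriv_smul hmeas hderiv hinj g
  rw [himg] at this
  rw [show (∫ x in Ioi (0:ℝ), x ^ (a - 1) / (1 + x)) = ∫ x in Ioi (0:ℝ), g x from rfl, this,
    setIntegral_congr_fun hmeas hkey, hbval]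
  rw [mul_comm a π]
  ring
end

section
/- There exists a constant C > 0 such that for every even integer n ≥ 2, the alternating cosecant sum satisfies |∑_{j=1}^{n-1} (−1)^{j+1} csc(jπ/n) − (n/π)·log 4| ≤ C. -/
open Real Finset

lemma alt_pair_bound (a : ℕ → ℝ) (d B : ℝ) (hB : 0 ≤ B) (hd : 0 ≤ d) :
    ∀ k : ℕ, (∀ j, 1 ≤ j → j + 1 ≤ k → |a (j+1) - a j| ≤ d) →
    (∀ j, 1 ≤ j → j ≤ k → |a j| ≤ B) →
    |∑ j ∈ Finset.Icc 1 k, (-1:ℝ) ^ (j + 1) * a j| ≤ k * d / 2 + B := by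
  intro k
  induction k using Nat.strong_induction_on with
  | _ k ih =>
    match k with
    | 0 => intro _ _; simp [hB]
    | 1 =>
      intro _ habs
      simpa using (le_add_of_nonneg_of_le (by positivity) (by simpa using habs 1 le_rfl le_rfl))
    | (k+2) =>
      intro hdiff habs
      have h1 : (1:ℕ) ≤ k + 1 := by omega
      have h2 : (1:ℕ) ≤ k + 2 := by omega
      rw [Finset.sum_Icc_succ_top h2, Finset.sum_Icc_succ_top h1]
      have hrec := ih k (by omega) (fun j hj hjk => hdiff j hj (by omega))
        (fun j hj hjk => habs j hj (by omega))
      have hds : |(-1:ℝ) ^ (k + 1 + 1) * a (k+1) + (-1:ℝ) ^ (k + 2 + 1) * a (k+2)| ≤ d := by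
        have : (-1:ℝ) ^ (k + 1 + 1) * a (k+1) + (-1:ℝ) ^ (k + 2 + 1) * a (k+2)
            = (-1:ℝ) ^ (k + 2) * (a (k+1) - a (k+2)) := by ring
        rw [this, abs_mul, abs_pow, abs_neg, abs_one, one_pow, one_mul, abs_sub_comm]
        exact hdiff (k+1) h1 le_rfl
      calc |∑ j ∈ Finset.Icc 1 k, (-1:ℝ) ^ (j + 1) * a j + (-1:ℝ) ^ (k + 1 + 1) * a (k+1)
            + (-1:ℝ) ^ (k + 2 + 1) * a (k+2)|
          ≤ |∑ j ∈ Finset.Icc 1 k, (-1:ℝ) ^ (j + 1) * a j|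
            + |(-1:ℝ) ^ (k + 1 + 1) * a (k+1) + (-1:ℝ) ^ (k + 2 + 1) * a (k+2)| := by
            rw [add_assoc]; exact abs_add_le _ _
        _ ≤ (k * d / 2 + B) + d := add_le_add hrec hds
        _ ≤ (k+2 : ℕ) * d / 2 + B := by push_cast; linarith

lemma alt_harmonic (k : ℕ) :
    |(∑ j ∈ Finset.Icc 1 k, (-1:ℝ) ^ (j + 1) / j) - Real.log 2| ≤ 1 / (k + 1) := by
  have hre : (∑ j ∈ Finset.Icc 1 k, (-1:ℝ) ^ (j + 1) / j)
      = ∑ i ∈ Finset.range k, (-1:ℝ) ^ i / (i + 1) := by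
    rw [← Finset.Ico_add_one_right_eq_Icc, Finset.sum_Ico_eq_sum_range]
    refine Finset.sum_congr (by norm_num) fun i _ => ?_
    have h1 : (-1:ℝ) ^ (1 + i + 1) = (-1:ℝ) ^ i := by
      rw [show 1 + i + 1 = i + 2 by ring, pow_add]; norm_num
    rw [h1]; push_cast; ring_nf
  have hterm : ∀ i : ℕ, ((-1:ℝ) ^ i / (i + 1)) = ∫ t in (0:ℝ)..1, (-t) ^ i := by
    intro i
    have h2 : (∫ t in (0:ℝ)..1, (-t) ^ i) = ∫ t in (0:ℝ)..1, (-1:ℝ)^i * t ^ i :=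
      intervalIntegral.integral_congr (fun t _ => by rw [neg_pow])
    rw [h2, intervalIntegral.integral_const_mul, integral_pow]
    norm_num [div_eq_mul_inv]
  have hcont : ∀ i : ℕ, IntervalIntegrable (fun t : ℝ => (-t) ^ i) MeasureTheory.volume 0 1 :=
    fun i => ((continuous_neg.pow i).intervalIntegrable 0 1)
  have hsum : (∑ i ∈ Finset.range k, (-1:ℝ) ^ i / (i + 1))
      = ∫ t in (0:ℝ)..1, ∑ i ∈ Finset.range k, (-t) ^ i := by
    rw [intervalIntegral.integral_finset_sum (fun i _ => hcont i)]
    exact Finset.sum_congr rfl fun i _ => hterm i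
  have hgeom : ∀ t ∈ Set.uIcc (0:ℝ) 1,
      (∑ i ∈ Finset.range k, (-t) ^ i) = 1/(1+t) - (-1)^k * (t^k/(1+t)) := by
    intro t ht
    rw [Set.uIcc_of_le (by norm_num : (0:ℝ) ≤ 1)] at ht
    have h1t : (1:ℝ) + t ≠ 0 := by nlinarith [ht.1]
    have hne : (-t : ℝ) ≠ 1 := by nlinarith [ht.1]
    rw [geom_sum_eq hne, neg_pow]
    rw [div_eq_iff (by nlinarith [ht.1] : (-t:ℝ) - 1 ≠ 0)]
    field_simp
    ring
  have hlogint : (∫ t in (0:ℝ)..1, 1/(1+t)) = Real.log 2 := by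
    have h3 := intervalIntegral.integral_comp_add_left (a := (0:ℝ)) (b := 1) (fun x : ℝ => 1/x) 1
    simp only [add_zero] at h3
    rw [show (∫ t in (0:ℝ)..1, 1/(1+t)) = ∫ t in (0:ℝ)..1, (fun x : ℝ => 1/x) (1 + t) from rfl,
      h3]
    rw [integral_one_div (by rw [Set.uIcc_of_le (by norm_num)]; simp : (0:ℝ) ∉ Set.uIcc 1 (1+1))]
    norm_num
  have hcont1 : ContinuousOn (fun t : ℝ => 1/(1+t)) (Set.uIcc 0 1) := by
    apply ContinuousOn.div continuousOn_const (by fun_prop)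
    intro t ht
    rw [Set.uIcc_of_le (by norm_num : (0:ℝ) ≤ 1)] at ht
    nlinarith [ht.1]
  have hcont3 : ContinuousOn (fun t : ℝ => t^k/(1+t)) (Set.uIcc 0 1) := by
    apply ContinuousOn.div (by fun_prop) (by fun_prop)
    intro t ht
    rw [Set.uIcc_of_le (by norm_num : (0:ℝ) ≤ 1)] at ht
    nlinarith [ht.1]
  have hcont2 : ContinuousOn (fun t : ℝ => (-1:ℝ)^k * (t^k/(1+t))) (Set.uIcc 0 1) :=
    ContinuousOn.mul continuousOn_const hcont3
  have hsplit : (∫ t in (0:ℝ)..1, ∑ i ∈ Finset.range k, (-t) ^ i)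
      = Real.log 2 - (-1)^k * ∫ t in (0:ℝ)..1, t^k/(1+t) := by
    rw [intervalIntegral.integral_congr hgeom, intervalIntegral.integral_sub
      (hcont1.intervalIntegrable) (hcont2.intervalIntegrable), hlogint,
      intervalIntegral.integral_const_mul]
  rw [hre, hsum, hsplit]
  have habs : |∫ t in (0:ℝ)..1, t^k/(1+t)| ≤ 1/(k+1) := by
    have hle : (∫ t in (0:ℝ)..1, t^k/(1+t)) ≤ ∫ t in (0:ℝ)..1, t^k := by
      apply intervalIntegral.integral_mono_on (by norm_num)
        hcont3.intervalIntegrable ((continuous_pow k).intervalIntegrable 0 1)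
      intro t ht
      have h0 : (0:ℝ) ≤ t := ht.1
      have h1t : (0:ℝ) < 1 + t := by linarith
      rw [div_le_iff₀ h1t]
      nlinarith [pow_nonneg h0 k]
    have hge : (0:ℝ) ≤ ∫ t in (0:ℝ)..1, t^k/(1+t) := by
      apply intervalIntegral.integral_nonneg (by norm_num)
      intro t ht
      have h0 : (0:ℝ) ≤ t := ht.1
      positivity
    rw [abs_of_nonneg hge]
    calc (∫ t in (0:ℝ)..1, t^k/(1+t)) ≤ ∫ t in (0:ℝ)..1, t^k := hle
      _ = 1/(k+1) := by rw [integral_pow]; push_cast; norm_num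
  calc |(Real.log 2 - (-1:ℝ)^k * ∫ t in (0:ℝ)..1, t^k/(1+t)) - Real.log 2|
      = |(-1:ℝ)^k * ∫ t in (0:ℝ)..1, t^k/(1+t)| := by rw [sub_sub_cancel_left, abs_neg]
    _ = |∫ t in (0:ℝ)..1, t^k/(1+t)| := by
        rw [abs_mul, abs_pow, abs_neg, abs_one, one_pow, one_mul]
    _ ≤ 1/(k+1) := habs

lemma cos_lb (x : ℝ) : 1 - x^2/2 ≤ Real.cos x := by
  have h : Real.cos x = Real.cos (x/2)^2 - Real.sin (x/2)^2 := by
    have h0 := Real.cos_two_mul' (x := x/2)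
    rwa [show 2*(x/2) = x by ring] at h0
  have h2 : Real.sin (x/2) ^ 2 ≤ (x/2)^2 := Real.sin_sq_le_sq
  have h3 := Real.sin_sq_add_cos_sq (x/2)
  nlinarith

lemma sub_sin_le {x : ℝ} (hx : 0 < x) (hx2 : x ≤ π/2) : x - Real.sin x ≤ x^3 := by
  rcases le_or_gt x 1 with h1 | h1
  · nlinarith [Real.sin_gt_sub_cube hx, pow_pos hx 3]
  · have hs : 0 ≤ Real.sin x := Real.sin_nonneg_of_nonneg_of_le_pi hx.le
      (by linarith [Real.pi_pos])
    have : x ≤ x^3 := by nlinarith [mul_pos (mul_pos hx (sub_pos.2 h1)) (by linarith : (0:ℝ) < x + 1)]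
    linarith

lemma g_hasDeriv {x : ℝ} (hx : 0 < x) (hx2 : x < π) :
    HasDerivAt (fun t : ℝ => 1/Real.sin t - 1/t)
      (-Real.cos x / Real.sin x ^ 2 + 1/x^2) x := by
  have hs : Real.sin x ≠ 0 := ne_of_gt (Real.sin_pos_of_pos_of_lt_pi hx hx2)
  have h1 : HasDerivAt (fun t : ℝ => (Real.sin t)⁻¹) (-Real.cos x / Real.sin x ^ 2) x := by
    exact (Real.hasDerivAt_sin x).inv hs
  have h2 : HasDerivAt (fun t : ℝ => t⁻¹) (-(1) / x ^ 2) x := by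
    exact (hasDerivAt_id' x).inv (ne_of_gt hx)
  have h3 := h1.sub h2
  simp only [one_div]
  exact h3.congr_deriv (by ring)

lemma g_deriv_bound {x : ℝ} (hx : 0 < x) (hx2 : x ≤ π/2) :
    |(-Real.cos x / Real.sin x ^ 2 + 1/x^2)| ≤ π^2/2 := by
  have hxpi : x < π := lt_of_le_of_lt hx2 (by linarith [Real.pi_pos])
  have hs : 0 < Real.sin x := Real.sin_pos_of_pos_of_lt_pi hx hxpi
  have hsx : Real.sin x ≤ x := (Real.sin_lt hx).le
  have hjordan : 2/π * x ≤ Real.sin x := Real.mul_le_sin hx.le hx2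
  have hcos : 1 - x^2/2 ≤ Real.cos x := cos_lb x
  have hcos1 : Real.cos x ≤ 1 := Real.cos_le_one x
  have hsub : x - Real.sin x ≤ x^3 := sub_sin_le hx hx2
  have hpi : 0 < π := Real.pi_pos
  have hden : 0 < x^2 * Real.sin x ^ 2 := mul_pos (by positivity) (pow_pos hs 2)
  have heq : -Real.cos x / Real.sin x ^ 2 + 1/x^2
      = (Real.sin x ^ 2 - x^2 * Real.cos x) / (x^2 * Real.sin x ^ 2) := by
    field_simp
    ring
  rw [heq, abs_div, abs_of_pos hden, div_le_iff₀ hden]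
  have h4 : (2/π*x)^2 ≤ Real.sin x ^ 2 := by
    have := pow_le_pow_left₀ (by positivity : (0:ℝ) ≤ 2/π*x) hjordan 2
    simpa using this
  have h5 : π^2/2 * (x^2 * ((2/π*x)^2)) ≤ π^2/2 * (x^2 * Real.sin x ^ 2) := by
    apply mul_le_mul_of_nonneg_left _ (by positivity)
    exact mul_le_mul_of_nonneg_left h4 (sq_nonneg x)
  have h6 : π^2/2 * (x^2 * ((2/π*x)^2)) = 2*x^4 := by
    field_simp
  have hkey : 2 * x^4 ≤ π^2/2 * (x^2 * Real.sin x ^ 2) := by linarith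
  have habs : |Real.sin x ^ 2 - x^2 * Real.cos x| ≤ 2 * x^4 := by
    rw [abs_le]
    constructor
    · -- lower: sin² - x²cos ≥ -2x⁴
      have hu : (x - Real.sin x) * (x + Real.sin x) ≤ x^3 * (x + Real.sin x) :=
        mul_le_mul_of_nonneg_right hsub (by linarith)
      have hv : x^3 * (x + Real.sin x) ≤ x^3 * (2*x) :=
        mul_le_mul_of_nonneg_left (by linarith) (by positivity)
      nlinarith
    · -- upper: sin² - x²cos ≤ 2x⁴
      have hu : Real.sin x ^ 2 ≤ x^2 := by nlinarith
      have hv : x^2 * (1 - x^2/2) ≤ x^2 * Real.cos x :=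
        mul_le_mul_of_nonneg_left hcos (sq_nonneg x)
      nlinarith
  linarith [abs_le.1 habs]

lemma g_abs_bound {x : ℝ} (hx : 0 < x) (hx2 : x ≤ π/2) :
    |1/Real.sin x - 1/x| ≤ π^2/4 := by
  have hxpi : x < π := lt_of_le_of_lt hx2 (by linarith [Real.pi_pos])
  have hs : 0 < Real.sin x := Real.sin_pos_of_pos_of_lt_pi hx hxpi
  have hsx : Real.sin x ≤ x := (Real.sin_lt hx).le
  have hjordan : 2/π * x ≤ Real.sin x := Real.mul_le_sin hx.le hx2
  have hsub : x - Real.sin x ≤ x^3 := sub_sin_le hx hx2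
  have hpi : 0 < π := Real.pi_pos
  have hden : 0 < x * Real.sin x := mul_pos hx hs
  have heq : 1/Real.sin x - 1/x = (x - Real.sin x) / (x * Real.sin x) := by
    rw [one_div, one_div, inv_sub_inv (ne_of_gt hs) (ne_of_gt hx), mul_comm]
  rw [heq, abs_div, abs_of_pos hden, abs_of_nonneg (by linarith), div_le_iff₀ hden]
  have h1 : 2/π * x^2 ≤ x * Real.sin x := by nlinarith
  have h2 : π^2/4 * (2/π * x^2) ≤ π^2/4 * (x * Real.sin x) :=
    mul_le_mul_of_nonneg_left h1 (by positivity)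
  have h3 : x^3 ≤ π^2/4 * (2/π * x^2) := by
    have : π^2/4 * (2/π * x^2) = π/2 * x^2 := by field_simp; ring
    rw [this]
    nlinarith
  linarith

lemma g_lip {x y : ℝ} (hx : 0 < x) (hxy : x ≤ y) (hy : y ≤ π/2) :
    |(1/Real.sin y - 1/y) - (1/Real.sin x - 1/x)| ≤ π^2/2 * (y - x) := by
  rcases eq_or_lt_of_le hxy with rfl | hlt
  · simp
  · have hpi : 0 < π := Real.pi_pos
    obtain ⟨c, hc, hceq⟩ := exists_hasDerivAt_eq_slope (fun t : ℝ => 1/Real.sin t - 1/t)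
      (fun t => -Real.cos t / Real.sin t ^ 2 + 1/t^2) hlt
      (fun t ht => (g_hasDeriv (lt_of_lt_of_le hx ht.1)
        (lt_of_le_of_lt (le_trans ht.2 hy) (by linarith))).continuousAt.continuousWithinAt)
      (fun t ht => g_hasDeriv (lt_trans hx ht.1)
        (lt_of_lt_of_le ht.2 (by linarith)))
    have hb : |(-Real.cos c / Real.sin c ^ 2 + 1/c^2)| ≤ π^2/2 :=
      g_deriv_bound (lt_trans hx hc.1) (le_trans hc.2.le hy)
    rw [hceq] at hb
    have hyx : 0 < y - x := by linarith
    calc |(1/Real.sin y - 1/y) - (1/Real.sin x - 1/x)|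
        = |((1/Real.sin y - 1/y) - (1/Real.sin x - 1/x)) / (y - x) * (y - x)| := by
          rw [div_mul_cancel₀ _ (ne_of_gt hyx)]
      _ = |((1/Real.sin y - 1/y) - (1/Real.sin x - 1/x)) / (y - x)| * (y - x) := by
          rw [abs_mul, abs_of_pos hyx]
      _ ≤ π^2/2 * (y - x) := mul_le_mul_of_nonneg_right hb hyx.le

lemma reflect (m : ℕ) (hm : 1 ≤ m) :
    (∑ j ∈ Finset.Icc 1 (2*m - 1), (-1:ℝ)^(j+1) / Real.sin (j*π/(2*m)))
      = 2 * (∑ j ∈ Finset.Icc 1 (m-1), (-1:ℝ)^(j+1) / Real.sin (j*π/(2*m)))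
        + (-1:ℝ)^(m+1) := by
  have hpi : 0 < π := Real.pi_pos
  have hm0 : (0:ℝ) < (m:ℝ) := by exact_mod_cast hm
  set f : ℕ → ℝ := fun j => (-1:ℝ)^(j+1) / Real.sin (j*π/(2*m)) with hf
  have hioc : ∀ k : ℕ, Finset.Icc 1 k = Finset.Ioc 0 k := fun k => by
    rw [← Finset.Icc_add_one_left_eq_Ioc, zero_add]
  have hsplit1 : (∑ j ∈ Finset.Ioc 0 (m-1), f j) + (∑ j ∈ Finset.Ioc (m-1) (2*m-1), f j)
      = ∑ j ∈ Finset.Ioc 0 (2*m-1), f j :=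
    Finset.sum_Ioc_consecutive f (by omega) (by omega)
  have hsplit2 : (∑ j ∈ Finset.Ioc (m-1) m, f j) + (∑ j ∈ Finset.Ioc m (2*m-1), f j)
      = ∑ j ∈ Finset.Ioc (m-1) (2*m-1), f j :=
    Finset.sum_Ioc_consecutive f (by omega) (by omega)
  have hsingle : (∑ j ∈ Finset.Ioc (m-1) m, f j) = f m := by
    have hset : Finset.Ioc (m-1) m = {m} := by
      rw [← Finset.Icc_add_one_left_eq_Ioc, show m-1+1 = m from by omega, Finset.Icc_self]
    rw [hset, Finset.sum_singleton]
  have hfm : f m = (-1:ℝ)^(m+1) := by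
    have : (m:ℝ)*π/(2*m) = π/2 := by field_simp
    rw [hf]; simp only [this, Real.sin_pi_div_two, div_one]
  have hrefl : (∑ j ∈ Finset.Ioc m (2*m-1), f j) = ∑ j ∈ Finset.Ioc 0 (m-1), f j := by
    apply Finset.sum_nbij' (fun j => 2*m - j) (fun j => 2*m - j)
    · intro a ha; simp only [Finset.mem_Ioc] at *; omega
    · intro a ha; simp only [Finset.mem_Ioc] at *; omega
    · intro a ha; simp only [Finset.mem_Ioc] at ha; omega
    · intro a ha; simp only [Finset.mem_Ioc] at ha; omega
    · intro j hj
      simp only [Finset.mem_Ioc] at hj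
      have hj2m : j ≤ 2*m := by omega
      have hsign : ((-1:ℝ))^(2*m - j + 1) = (-1:ℝ)^(j+1) := by
        rcases Nat.even_or_odd j with he | ho
        · have h1 : Odd (2*m - j + 1) := by
            rw [Nat.odd_iff]; rw [Nat.even_iff] at he; omega
          have h2 : Odd (j + 1) := by
            rw [Nat.odd_iff]; rw [Nat.even_iff] at he; omega
          rw [h1.neg_one_pow, h2.neg_one_pow]
        · have h1 : Even (2*m - j + 1) := by
            rw [Nat.even_iff]; rw [Nat.odd_iff] at ho; omega
          have h2 : Even (j + 1) := by
            rw [Nat.even_iff]; rw [Nat.odd_iff] at ho; omega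
          rw [h1.neg_one_pow, h2.neg_one_pow]
      have hsin : Real.sin ((2*m - j : ℕ)*π/(2*m)) = Real.sin (j*π/(2*m)) := by
        have hc : ((2*m - j : ℕ):ℝ) = 2*(m:ℝ) - j := by
          push_cast [hj2m]; ring
        rw [hc, show (2*(m:ℝ) - j)*π/(2*m) = π - j*π/(2*m) by field_simp,
          Real.sin_pi_sub]
      rw [hf]; simp only [hsign, hsin]
  have key := hsplit1
  rw [← hsplit2, hsingle, hfm, hrefl] at key
  rw [hioc, ← key, hioc (m-1)]
  ring


theorem alternating_csc_sum_asymptotic :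
    ∃ C : ℝ, 0 < C ∧ ∀ n : ℕ, Even n → 2 ≤ n →
      |(∑ j ∈ Finset.Icc 1 (n - 1), (-1 : ℝ) ^ (j + 1) / Real.sin (j * π / n)) -
          (n / π) * Real.log 4| ≤ C := by
  refine ⟨100, by norm_num, ?_⟩
  intro n hev hn2
  obtain ⟨m, hm'⟩ := hev
  have hn : n = 2*m := by omega
  have hm : 1 ≤ m := by omega
  subst hn
  have hpi : 0 < π := Real.pi_pos
  have hm0 : (0:ℝ) < (m:ℝ) := by exact_mod_cast hm
  push_cast
  rw [reflect m hm]
  set A : ℝ := ∑ j ∈ Finset.Icc 1 (m-1), (-1:ℝ)^(j+1)/(j:ℝ) with hA_def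
  set G : ℝ := ∑ j ∈ Finset.Icc 1 (m-1),
      (-1:ℝ)^(j+1) * (1/Real.sin (j*π/(2*m)) - 1/((j:ℝ)*π/(2*m))) with hG_def
  have hdecomp : ∀ j ∈ Finset.Icc 1 (m-1),
      (-1:ℝ)^(j+1)/Real.sin ((j:ℝ)*π/(2*m))
        = (2*(m:ℝ)/π) * ((-1:ℝ)^(j+1)/(j:ℝ))
          + (-1:ℝ)^(j+1) * (1/Real.sin ((j:ℝ)*π/(2*m)) - 1/((j:ℝ)*π/(2*m))) := by
    intro j hj
    rw [Finset.mem_Icc] at hj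
    have hj1 : (1:ℝ) ≤ (j:ℝ) := by exact_mod_cast hj.1
    have hj0 : (0:ℝ) < (j:ℝ) := by linarith
    have hxpos : 0 < (j:ℝ)*π/(2*m) := by positivity
    have hxle : (j:ℝ)*π/(2*m) ≤ π/2 := by
      rw [div_le_div_iff₀ (by positivity) (by norm_num)]
      have : (j:ℝ) ≤ (m:ℝ) := by
        have : j ≤ m := by omega
        exact_mod_cast this
      nlinarith
    have hxpi : (j:ℝ)*π/(2*m) < π := lt_of_le_of_lt hxle (by linarith)
    have hs : Real.sin ((j:ℝ)*π/(2*m)) ≠ 0 :=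
      ne_of_gt (Real.sin_pos_of_pos_of_lt_pi hxpos hxpi)
    field_simp
    ring
  have hsum_eq : (∑ j ∈ Finset.Icc 1 (m-1), (-1:ℝ)^(j+1)/Real.sin ((j:ℝ)*π/(2*m)))
      = (2*(m:ℝ)/π) * A + G := by
    rw [Finset.sum_congr rfl hdecomp, Finset.sum_add_distrib, ← Finset.mul_sum]
  rw [hsum_eq]
  -- bound on A
  have hA : |A - Real.log 2| ≤ 1/(m:ℝ) := by
    have h := alt_harmonic (m-1)
    have hc : ((m-1:ℕ):ℝ) + 1 = (m:ℝ) := by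
      have : ((m-1:ℕ):ℝ) = (m:ℝ) - 1 := by
        push_cast [hm]; ring
      rw [this]; ring
    rwa [hc] at h
  -- bound on G
  have hG : |G| ≤ ((m-1:ℕ):ℝ) * (π^2/2 * (π/(2*m)))/2 + π^2/4 := by
    apply alt_pair_bound (fun j => 1/Real.sin ((j:ℝ)*π/(2*m)) - 1/((j:ℝ)*π/(2*m)))
      (π^2/2 * (π/(2*m))) (π^2/4) (by positivity) (by positivity) (m-1)
    · intro j hj1 hjk
      have hj0 : (0:ℝ) < (j:ℝ) := by exact_mod_cast hj1
      have hjm : j + 1 ≤ m := by omega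
      have hjmr : ((j:ℝ)+1) ≤ (m:ℝ) := by exact_mod_cast hjm
      have hxpos : 0 < (j:ℝ)*π/(2*m) := by positivity
      have hxy : (j:ℝ)*π/(2*m) ≤ ((j:ℝ)+1)*π/(2*m) := by
        apply div_le_div_of_nonneg_right _ (by positivity)
        nlinarith
      have hy : ((j:ℝ)+1)*π/(2*m) ≤ π/2 := by
        rw [div_le_div_iff₀ (by positivity) (by norm_num)]
        nlinarith
      have hl := g_lip hxpos hxy hy
      have hdd : ((j:ℝ)+1)*π/(2*m) - (j:ℝ)*π/(2*m) = π/(2*m) := by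
        field_simp
        ring
      rw [hdd] at hl
      have hcast : ((j+1:ℕ):ℝ) = (j:ℝ) + 1 := by push_cast; ring
      simpa [hcast] using hl
    · intro j hj1 hjk
      have hj0 : (0:ℝ) < (j:ℝ) := by exact_mod_cast hj1
      have hjm : j ≤ m := by omega
      have hjmr : (j:ℝ) ≤ (m:ℝ) := by exact_mod_cast hjm
      have hxpos : 0 < (j:ℝ)*π/(2*m) := by positivity
      have hxle : (j:ℝ)*π/(2*m) ≤ π/2 := by
        rw [div_le_div_iff₀ (by positivity) (by norm_num)]
        nlinarith
      exact g_abs_bound hxpos hxle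
  -- numeric assembly
  have hlog4 : Real.log 4 = 2*Real.log 2 := by
    rw [show (4:ℝ) = 2^2 by norm_num, Real.log_pow]
    push_cast; ring
  have hexp : 2*((2*(m:ℝ)/π)*A + G) + (-1:ℝ)^(m+1) - 2*(m:ℝ)/π*Real.log 4
      = (4*(m:ℝ)/π)*(A - Real.log 2) + 2*G + (-1:ℝ)^(m+1) := by
    rw [hlog4]; ring
  rw [hexp]
  have h1 : |(4*(m:ℝ)/π)*(A - Real.log 2)| ≤ 4/π := by
    rw [abs_mul, abs_of_pos (by positivity : (0:ℝ) < 4*(m:ℝ)/π)]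
    calc 4*(m:ℝ)/π * |A - Real.log 2| ≤ 4*(m:ℝ)/π * (1/(m:ℝ)) :=
          mul_le_mul_of_nonneg_left hA (by positivity)
      _ = 4/π := by field_simp
  have hmle : ((m-1:ℕ):ℝ) ≤ (m:ℝ) := by
    have : m - 1 ≤ m := by omega
    exact_mod_cast this
  have hpile : π ≤ 4 := Real.pi_le_four
  have hpigt : 3 < π := Real.pi_gt_three
  have h2 : |G| ≤ 12 := by
    have hb1 : ((m-1:ℕ):ℝ) * (π^2/2 * (π/(2*m)))/2 ≤ π^3/8 := by
      rw [show ((m-1:ℕ):ℝ) * (π^2/2 * (π/(2*m)))/2 = ((m-1:ℕ):ℝ)/(m:ℝ) * (π^3/8) by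
        field_simp; ring]
      have hle1 : ((m-1:ℕ):ℝ)/(m:ℝ) ≤ 1 := by
        rw [div_le_one hm0]; exact hmle
      exact mul_le_of_le_one_left (by positivity) hle1
    have hp3 : π^3 ≤ 4^3 := pow_le_pow_left₀ hpi.le hpile 3
    have hp2 : π^2 ≤ 4^2 := pow_le_pow_left₀ hpi.le hpile 2
    have hb2 : π^3/8 ≤ 8 := by norm_num at hp3 ⊢; linarith
    have hb3 : π^2/4 ≤ 4 := by norm_num at hp2 ⊢; linarith
    linarith
  have h3 : |(-1:ℝ)^(m+1)| = 1 := by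
    rw [abs_pow, abs_neg, abs_one, one_pow]
  calc |(4*(m:ℝ)/π)*(A - Real.log 2) + 2*G + (-1:ℝ)^(m+1)|
      ≤ |(4*(m:ℝ)/π)*(A - Real.log 2) + 2*G| + |(-1:ℝ)^(m+1)| := abs_add_le _ _
    _ ≤ |(4*(m:ℝ)/π)*(A - Real.log 2)| + |2*G| + |(-1:ℝ)^(m+1)| := by
        have := abs_add_le ((4*(m:ℝ)/π)*(A - Real.log 2)) (2*G)
        linarith
    _ ≤ 4/π + 2*12 + 1 := by
        rw [h3, abs_mul (2:ℝ) G, abs_of_pos (by norm_num : (0:ℝ) < 2)]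
        have h4pi : (4:ℝ)/π ≤ 4/3 := by
          rw [div_le_div_iff₀ hpi (by norm_num)]; linarith
        linarith [h1, h2]
    _ ≤ 100 := by
        have : (4:ℝ)/π ≤ 2 := by
          rw [div_le_iff₀ hpi]; linarith
        linarith
end

section
/- There exists a constant C > 0 such that for every even integer n ≥ 4, |∑_{j=0}^{n/2−1} csc³((2j+1)π/n) − (7ζ(3)/(4π³))·n³| ≤ C·n·log n. -/
open Real Finset

lemma csc3_bd {x : ℝ} (hx : 0 < x) (hx2 : x ≤ π/2) :
    0 ≤ (1/Real.sin x)^3 - 1/x^3 ∧ (1/Real.sin x)^3 - 1/x^3 ≤ 4/x := by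
  have hxpi : x < π := lt_of_le_of_lt hx2 (by linarith [Real.pi_pos])
  have hs : 0 < Real.sin x := Real.sin_pos_of_pos_of_lt_pi hx hxpi
  have hsle : Real.sin x ≤ x := Real.sin_le hx.le
  constructor
  · have h1 : 1/x^3 ≤ 1/(Real.sin x)^3 := by
      apply one_div_le_one_div_of_le (by positivity)
      exact pow_le_pow_left₀ hs.le hsle 3
    have : (1/Real.sin x)^3 = 1/(Real.sin x)^3 := by rw [div_pow, one_pow]
    linarith
  · rw [div_pow, one_pow]
    rcases le_or_gt x 1 with hx1 | hx1
    · have hcube : x - x^3/4 < Real.sin x := by have := Real.sin_gt_sub_cube hx; nlinarith [pow_pos hx 3]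
      have hx3 : x^3 ≤ x := by nlinarith [mul_nonneg (mul_nonneg hx.le (sub_nonneg.2 hx1)) (by linarith : (0:ℝ) ≤ 1+x)]
      have hpos : 0 < x - x^3/4 := by nlinarith
      have key : x^3 ≤ (Real.sin x)^3 * (1 + 4*x^2) := by
        have h3 : (x - x^3/4)^3 ≤ (Real.sin x)^3 := pow_le_pow_left₀ hpos.le hcube.le 3
        have hpoly : x^3 ≤ (x - x^3/4)^3 * (1 + 4*x^2) := by nlinarith [sq_nonneg x, pow_pos hx 3, sq_nonneg (x^2), sq_nonneg (x^2*(1-x^2)), pow_pos hx 5]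
        nlinarith [sq_nonneg x]
      have h4 : 1/(Real.sin x)^3 ≤ (1+4*x^2)/x^3 := by
        rw [div_le_div_iff₀ (by positivity) (by positivity)]
        nlinarith
      have h5 : (1+4*x^2)/x^3 = 1/x^3 + 4/x := by field_simp
      linarith
    · have hsin1 : (3:ℝ)/4 < Real.sin 1 := by
        have := Real.sin_gt_sub_cube (x := 1) one_pos
        norm_num at this ⊢; linarith
      have hmono : Real.sin 1 ≤ Real.sin x := by
        apply (Real.strictMonoOn_sin.monotoneOn) _ _ hx1.le
        · constructor <;> [linarith [Real.pi_pos]; linarith [Real.pi_gt_three]]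
        · constructor <;> [linarith [Real.pi_pos]; linarith]
      have hs34 : (3:ℝ)/4 ≤ Real.sin x := by linarith
      have hc : ((3:ℝ)/4)^3 ≤ (Real.sin x)^3 := pow_le_pow_left₀ (by norm_num) hs34 3
      have h1 : 1/(Real.sin x)^3 ≤ 64/27 := by
        rw [div_le_div_iff₀ (by positivity) (by norm_num)]
        nlinarith
      have h2 : x < 8/5 := by linarith [Real.pi_lt_d2]
      have h3 : (0:ℝ) < 1/x^3 := by positivity
      have : (64:ℝ)/27 ≤ 4/x := by
        rw [div_le_div_iff₀ (by norm_num) hx]; linarith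
      linarith

lemma csc3_pw {t : ℝ} (ht : 0 < t) (ht2 : t < π) :
    |(1/Real.sin t)^3 - 1/t^3 - 1/(π-t)^3| ≤ 4*(1/t + 1/(π-t)) := by
  have hpi := Real.pi_pos
  have hts : 0 < π - t := by linarith
  rcases le_or_gt t (π/2) with h | h
  · obtain ⟨hl, hu⟩ := csc3_bd ht h
    have h2 : (1:ℝ) ≤ π - t := by linarith [Real.pi_gt_three]
    have h3 : 1/(π-t)^3 ≤ 1/(π-t) :=
      one_div_le_one_div_of_le hts (le_self_pow₀ h2 (by norm_num))
    have h4 : (0:ℝ) ≤ 1/(π-t)^3 := by positivity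
    have h6 : 4/t = 4*(1/t) := by ring
    have h7 : (0:ℝ) ≤ 1/(π-t) := le_trans h4 h3
    have h8 : (0:ℝ) ≤ 1/t := by positivity
    rw [abs_le]
    constructor <;> linarith
  · set x := π - t with hxdef
    have hx : 0 < x := hts
    have hx2 : x ≤ π/2 := by simp only [hxdef]; linarith
    obtain ⟨hl, hu⟩ := csc3_bd hx hx2
    have hsin : Real.sin t = Real.sin x := by rw [hxdef, Real.sin_pi_sub]
    have h2 : (1:ℝ) ≤ t := by linarith [Real.pi_gt_three]
    have h3 : 1/t^3 ≤ 1/t :=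
      one_div_le_one_div_of_le ht (le_self_pow₀ h2 (by norm_num))
    have h4 : (0:ℝ) ≤ 1/t^3 := by positivity
    have h6 : 4/x = 4*(1/x) := by ring
    have h7 : (0:ℝ) ≤ 1/t := le_trans h4 h3
    have h8 : (0:ℝ) ≤ 1/x := by positivity
    rw [hsin, abs_le]
    constructor <;> linarith

-- ∑_{j<m} 1/(2j+1) ≤ 1 + log(2m) for m ≥ 1
lemma harm_log : ∀ m : ℕ, 1 ≤ m → ∑ j ∈ range m, (1/(2*(j:ℝ)+1)) ≤ 1 + Real.log (2*m) := by
  intro m hm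
  induction m with
  | zero => omega
  | succ k ih =>
    rcases Nat.eq_or_lt_of_le hm with h1 | h1
    · simp [← h1]
      have : (0:ℝ) ≤ Real.log 2 := Real.log_nonneg (by norm_num)
      norm_num
      linarith
    · have hk : 1 ≤ k := by omega
      have hkR : (1:ℝ) ≤ k := by exact_mod_cast hk
      have step : 1/(2*(k:ℝ)+1) ≤ Real.log (2*(k+1)) - Real.log (2*k) := by
        rw [← Real.log_div (by positivity) (by positivity)]
        have h2 : (2*((k:ℝ)+1))/(2*k) = ((k:ℝ)+1)/k := by
          field_simp
        rw [h2]
        have h3 : Real.log ((k:ℝ)/(k+1)) ≤ (k:ℝ)/(k+1) - 1 :=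
          Real.log_le_sub_one_of_pos (by positivity)
        have h4 : Real.log ((k:ℝ)/(k+1)) = - Real.log (((k:ℝ)+1)/k) := by
          rw [← Real.log_inv]; congr 1; field_simp
        have h5 : (k:ℝ)/(k+1) - 1 = -(1/(k+1)) := by field_simp; ring
        have h6 : 1/(2*(k:ℝ)+1) ≤ 1/((k:ℝ)+1) := by
          apply one_div_le_one_div_of_le (by positivity); linarith
        linarith
      have := ih hk
      rw [Finset.sum_range_succ]
      push_cast
      push_cast at this step
      linarith

-- tail bound : ∑' i, 1/(2(i+m)+1)^3 ≤ 1/(16(m-1)m)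
lemma tail_bd (m : ℕ) (hm : 2 ≤ m) :
    ∑' i : ℕ, 1/(2*((i:ℝ)+m)+1)^3 ≤ 1/(16*((m:ℝ)-1)*m) := by
  have hmR : (2:ℝ) ≤ m := by exact_mod_cast hm
  set b : ℕ → ℝ := fun i => 1/(((m:ℝ)+i-1)*((m:ℝ)+i)) with hb
  apply Real.tsum_le_of_sum_range_le (fun i => by positivity)
  intro N
  have key : ∀ i : ℕ, 1/(2*((i:ℝ)+m)+1)^3 ≤ (1/16)*(b i - b (i+1)) := by
    intro i
    have hy : (2:ℝ) ≤ (m:ℝ)+i := by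
      have : (0:ℝ) ≤ i := Nat.cast_nonneg i
      linarith
    set y : ℝ := (m:ℝ)+i with hydef
    have h1 : b i = 1/((y-1)*y) := by simp [hb, hydef]
    have h2 : b (i+1) = 1/(y*(y+1)) := by
      simp [hb, hydef]; push_cast; ring_nf
    rw [h1, h2]
    have hy1 : (0:ℝ) < y - 1 := by linarith
    have hy0 : (0:ℝ) < y := by linarith
    have hy2 : (0:ℝ) < y + 1 := by linarith
    have hdiff : 1/((y-1)*y) - 1/(y*(y+1)) = 2/((y-1)*y*(y+1)) := by
      field_simp; ring
    rw [hdiff]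
    have hc : 2*((i:ℝ)+m)+1 = 2*y+1 := by rw [hydef]; ring
    clear_value y
    rw [hc, show (1:ℝ)/16 * (2/((y-1)*y*(y+1))) = 1/(8*((y-1)*y*(y+1))) from by field_simp; ring]
    rw [div_le_div_iff₀ (by positivity) (by positivity)]
    nlinarith [sq_nonneg y, hy0.le]
  calc ∑ i ∈ range N, 1/(2*((i:ℝ)+m)+1)^3
      ≤ ∑ i ∈ range N, (1/16)*(b i - b (i+1)) := Finset.sum_le_sum (fun i _ => key i)
    _ = (1/16)*(b 0 - b N) := by rw [← Finset.mul_sum, Finset.sum_range_sub' b N]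
    _ ≤ (1/16)*(b 0) := by
        have : (0:ℝ) ≤ b N := by
          apply le_of_lt; apply div_pos one_pos
          have : (0:ℝ) ≤ (N:ℝ) := Nat.cast_nonneg N
          nlinarith
        linarith
    _ = 1/(16*((m:ℝ)-1)*m) := by
        simp [hb]
        field_simp

lemma zsum : Summable (fun k : ℕ => 1/((k:ℝ)+1)^3) := by
  have h := (summable_one_div_nat_pow (p := 3)).2 (by norm_num)
  have := (summable_nat_add_iff (f := fun n : ℕ => 1/(n:ℝ)^3) 1).2 h
  simpa using this

lemma zsum_odd : Summable (fun k : ℕ => 1/(2*(k:ℝ)+1)^3) := by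
  apply Summable.of_nonneg_of_le (fun k => by positivity) _ zsum
  intro k
  apply one_div_le_one_div_of_le (by positivity)
  have : ((k:ℝ)+1) ≤ 2*k+1 := by
    have : (0:ℝ) ≤ k := Nat.cast_nonneg k
    linarith
  exact pow_le_pow_left₀ (by positivity) this 3

lemma zeta_odd_eq :
    ∑' k : ℕ, 1/(2*(k:ℝ)+1)^3 = 7 * (∑' k : ℕ, 1/((k:ℝ)+1)^3) / 8 := by
  set F : ℕ → ℝ := fun k => 1/((k:ℝ)+1)^3 with hF
  have he : (fun k : ℕ => F (2*k)) = fun k : ℕ => 1/(2*(k:ℝ)+1)^3 := by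
    funext k; simp [hF]
  have ho : (fun k : ℕ => F (2*k+1)) = fun k : ℕ => (1/8) * F k := by
    funext k; simp [hF]; push_cast; field_simp; ring
  have hse : Summable (fun k : ℕ => F (2*k)) := by rw [he]; exact zsum_odd
  have hso : Summable (fun k : ℕ => F (2*k+1)) := by
    rw [ho]; exact zsum.mul_left _
  have hmain := tsum_even_add_odd hse hso
  have h1 : ∑' k : ℕ, F (2*k+1) = (1/8) * ∑' k, F k := by
    rw [ho, tsum_mul_left]
  have h2 : ∑' k : ℕ, F (2*k) = ∑' k : ℕ, 1/(2*(k:ℝ)+1)^3 := by rw [he]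
  rw [h1, h2] at hmain
  linarith

lemma refl_sum (m : ℕ) (φ : ℝ → ℝ) :
    ∑ j ∈ range m, φ (π - (2*(j:ℝ)+1)*π/(2*(m:ℝ))) =
      ∑ j ∈ range m, φ ((2*(j:ℝ)+1)*π/(2*(m:ℝ))) := by
  rw [← Finset.sum_range_reflect (fun j => φ ((2*(j:ℝ)+1)*π/(2*(m:ℝ)))) m]
  apply Finset.sum_congr rfl
  intro j hj
  have hj' : j < m := Finset.mem_range.mp hj
  have hm0 : (0:ℝ) < m := by exact_mod_cast Nat.pos_of_ne_zero (by omega)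
  congr 1
  have h1 : ((m - 1 - j : ℕ):ℝ) = (m:ℝ) - 1 - j := by
    rw [Nat.sub_sub, Nat.cast_sub (by omega)]
    push_cast; ring
  rw [h1]
  field_simp
  ring

lemma inv_theta (a b c : ℝ) (ha : a ≠ 0) (hb : b ≠ 0) (hc : c ≠ 0) :
    1/(a*b/c) = c/b * (1/a) := by field_simp

lemma inv_theta3 (a b c : ℝ) (ha : a ≠ 0) (hb : b ≠ 0) (hc : c ≠ 0) :
    1/(a*b/c)^3 = c^3/b^3 * (1/a^3) := by
  rw [div_pow, mul_pow]; field_simp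

theorem csc_cubed_odd_sum_asymptotic :
    ∃ C : ℝ, 0 < C ∧ ∀ n : ℕ, Even n → 4 ≤ n →
      |(∑ j ∈ Finset.range (n / 2), (1 / Real.sin ((2 * j + 1) * π / n)) ^ 3) -
          (7 * (∑' k : ℕ, 1 / ((k : ℝ) + 1) ^ 3) / (4 * π ^ 3)) * n ^ 3| ≤
        C * n * Real.log n := by
  refine ⟨6, by norm_num, ?_⟩
  intro n hev hn4
  have hpi := Real.pi_pos
  have hpi3 := Real.pi_gt_three
  obtain ⟨m, hm⟩ := hev
  have hnm : n = 2 * m := by omega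
  have hm2 : 2 ≤ m := by omega
  have hdiv : n / 2 = m := by omega
  have hmR : (2:ℝ) ≤ (m:ℝ) := by exact_mod_cast hm2
  have hm0 : (0:ℝ) < (m:ℝ) := by linarith
  have hNcast : (n:ℝ) = 2*(m:ℝ) := by rw [hnm]; push_cast; ring
  rw [hdiv, hNcast]
  set ζ3 : ℝ := ∑' k : ℕ, 1 / ((k : ℝ) + 1) ^ 3 with hζ
  set N : ℝ := 2*(m:ℝ) with hNdef
  have hN0 : 0 < N := by rw [hNdef]; linarith
  have hN4 : (4:ℝ) ≤ N := by rw [hNdef]; linarith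
  set L : ℝ := Real.log N with hL
  have hL1 : 1 ≤ L := by
    have h4 : Real.log 4 ≤ L := Real.log_le_log (by norm_num) hN4
    have : Real.log 4 = 2 * Real.log 2 := by
      rw [show (4:ℝ) = 2^2 by norm_num, Real.log_pow]; push_cast; ring
    have h2 := Real.log_two_gt_d9
    linarith
  set θ : ℕ → ℝ := fun j => (2*(j:ℝ)+1)*π/N with hθ
  have hθp : ∀ j, j < m → 0 < θ j ∧ θ j < π := by
    intro j hj
    have hj' : (j:ℝ) < m := by exact_mod_cast hj
    have h0 : (0:ℝ) ≤ j := Nat.cast_nonneg j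
    constructor
    · exact div_pos (by positivity) hN0
    · rw [hθ, div_lt_iff₀ hN0]
      have hj'' : (j:ℝ) + 1 ≤ m := by exact_mod_cast hj
      have hkey : 0 < π * (N - (2*(j:ℝ)+1)) := by
        apply mul_pos hpi
        rw [hNdef]; linarith
      nlinarith [hkey]
  set P : ℝ := ∑ j ∈ range m, 1/(2*(j:ℝ)+1)^3 with hP
  set H : ℝ := ∑ j ∈ range m, 1/(2*(j:ℝ)+1) with hHdef
  set S : ℝ := ∑ j ∈ range m, (1 / Real.sin (θ j)) ^ 3 with hS
  set M : ℝ := 2*(N^3/π^3)*P with hM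
  -- step 1 : |S - M| ≤ 8*(N/π)*H
  have key1 : |S - M| ≤ 8*(N/π)*H := by
    have hsum : S = (∑ j ∈ range m, (1/(θ j)^3 + 1/(π - θ j)^3))
        + ∑ j ∈ range m, ((1/Real.sin (θ j))^3 - 1/(θ j)^3 - 1/(π - θ j)^3) := by
      rw [← Finset.sum_add_distrib]
      apply Finset.sum_congr rfl
      intro j _; ring
    have hU1 : ∑ j ∈ range m, 1/(π - θ j)^3 = ∑ j ∈ range m, 1/(θ j)^3 := by
      simp only [hθ, hNdef]
      exact refl_sum m (fun x => 1/x^3)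
    have hU2 : ∑ j ∈ range m, 1/(θ j)^3 = (N^3/π^3) * P := by
      rw [hP, Finset.mul_sum]
      apply Finset.sum_congr rfl
      intro j _
      have h1 : (0:ℝ) < 2*(j:ℝ)+1 := by positivity
      rw [hθ]
      exact inv_theta3 _ _ _ h1.ne' hpi.ne' hN0.ne'
    have hUm : ∑ j ∈ range m, (1/(θ j)^3 + 1/(π - θ j)^3) = M := by
      rw [Finset.sum_add_distrib, hU1, hU2, hM]; ring
    have hE : |∑ j ∈ range m, ((1/Real.sin (θ j))^3 - 1/(θ j)^3 - 1/(π - θ j)^3)|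
        ≤ ∑ j ∈ range m, 4*(1/(θ j) + 1/(π - θ j)) := by
      refine (Finset.abs_sum_le_sum_abs _ _).trans (Finset.sum_le_sum ?_)
      intro j hj
      obtain ⟨h1, h2⟩ := hθp j (Finset.mem_range.mp hj)
      exact csc3_pw h1 h2
    have hT1 : ∑ j ∈ range m, 1/(π - θ j) = ∑ j ∈ range m, 1/(θ j) := by
      simp only [hθ, hNdef]
      exact refl_sum m (fun x => 1/x)
    have hT2 : ∑ j ∈ range m, 1/(θ j) = (N/π) * H := by
      rw [hHdef, Finset.mul_sum]
      apply Finset.sum_congr rfl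
      intro j _
      have h1 : (0:ℝ) < 2*(j:ℝ)+1 := by positivity
      rw [hθ]
      exact inv_theta _ _ _ h1.ne' hpi.ne' hN0.ne'
    have hEsum : ∑ j ∈ range m, 4*(1/(θ j) + 1/(π - θ j)) = 8*(N/π)*H := by
      have h4 : ∑ j ∈ range m, 4*(1/(θ j) + 1/(π - θ j))
          = 4*(∑ j ∈ range m, 1/(θ j) + ∑ j ∈ range m, 1/(π - θ j)) := by
        rw [← Finset.sum_add_distrib, Finset.mul_sum]
      rw [h4, hT1, hT2]; ring
    have hdiffeq : S - M = ∑ j ∈ range m, ((1/Real.sin (θ j))^3 - 1/(θ j)^3 - 1/(π - θ j)^3) := by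
      rw [hsum, hUm]; ring
    rw [hdiffeq]
    exact hE.trans hEsum.le
  -- step 2
  have key2 : |M - (7 * ζ3 / (4 * π ^ 3)) * N ^ 3| ≤ N*L*(1/27) := by
    have hτs := Summable.sum_add_tsum_nat_add (f := fun k : ℕ => 1/(2*(k:ℝ)+1)^3) m zsum_odd
    set τ : ℝ := ∑' i : ℕ, 1/(2*((i:ℝ)+(m:ℝ))+1)^3 with hτ
    have hτc : τ = ∑' i : ℕ, 1/(2*((i+m : ℕ):ℝ)+1)^3 := by
      rw [hτ]; apply tsum_congr; intro i; push_cast; ring_nf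
    have hPτ : P + τ = 7 * ζ3 / 8 := by
      rw [hτc, hP, hζ, ← zeta_odd_eq]
      simpa using hτs
    have hτ0 : 0 ≤ τ := by
      rw [hτ]; apply tsum_nonneg; intro i; positivity
    have hτb : τ ≤ 1/(2*N^2) := by
      refine (tail_bd m hm2).trans ?_
      apply one_div_le_one_div_of_le (by positivity)
      rw [hNdef]; nlinarith
    have hP' : P = 7*ζ3/8 - τ := by linarith
    have hMA : M - (7 * ζ3 / (4 * π ^ 3)) * N ^ 3 = -(2*(N^3/π^3)*τ) := by
      rw [hM, hP']; field_simp; ring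
    have hNP : (0:ℝ) ≤ 2*(N^3/π^3) :=
      mul_nonneg (by norm_num) (div_nonneg (pow_nonneg hN0.le 3) (pow_nonneg hpi.le 3))
    rw [hMA, abs_neg, abs_of_nonneg (mul_nonneg hNP hτ0)]
    have h1 : 2*(N^3/π^3)*τ ≤ 2*(N^3/π^3)*(1/(2*N^2)) :=
      mul_le_mul_of_nonneg_left hτb hNP
    have h2 : 2*(N^3/π^3)*(1/(2*N^2)) = N*(1/π^3) := by
      field_simp
    have h3 : (1:ℝ)/π^3 ≤ 1/27 := by
      apply one_div_le_one_div_of_le (by norm_num)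
      have h33 : (3:ℝ)^3 < π^3 := pow_lt_pow_left₀ hpi3 (by norm_num) (by norm_num)
      norm_num at h33; linarith
    have h4 : N*(1/π^3) ≤ N*(1/27) := mul_le_mul_of_nonneg_left h3 hN0.le
    have h5 : N*(1/27) ≤ N*L*(1/27) := mul_le_mul_of_nonneg_right (le_mul_of_one_le_right hN0.le hL1) (by norm_num)
    linarith
  -- combine
  have hHb : H ≤ 2*L := by
    have hh := harm_log m (by omega)
    have hlog : Real.log (2*(m:ℝ)) = L := by rw [hL, hNdef]
    rw [hlog] at hh
    rw [hHdef]
    linarith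
  have hH0 : 0 ≤ H := by
    rw [hHdef]; apply Finset.sum_nonneg; intro j _; positivity
  have hNL : (0:ℝ) ≤ N*L := mul_nonneg hN0.le (by linarith)
  clear_value ζ3 N L θ P H S M
  have hb1 : 8*(N/π)*H ≤ (16/3)*(N*L) := by
    have s1 : 8*(N/π)*H ≤ 8*(N/π)*(2*L) :=
      mul_le_mul_of_nonneg_left hHb (mul_nonneg (by norm_num) (div_nonneg hN0.le hpi.le))
    have s2 : 8*(N/π)*(2*L) = 16*(1/π)*(N*L) := by ring
    have s3 : (1:ℝ)/π ≤ 1/3 := one_div_le_one_div_of_le (by norm_num) hpi3.le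
    have s4 : 16*(1/π)*(N*L) ≤ 16*(1/3)*(N*L) := mul_le_mul_of_nonneg_right (by linarith : (16:ℝ)*(1/π) ≤ 16*(1/3)) hNL
    calc 8*(N/π)*H ≤ 8*(N/π)*(2*L) := s1
      _ = 16*(1/π)*(N*L) := s2
      _ ≤ 16*(1/3)*(N*L) := s4
      _ = (16/3)*(N*L) := by ring
  calc |S - (7 * ζ3 / (4 * π ^ 3)) * N ^ 3|
      ≤ |S - M| + |M - (7 * ζ3 / (4 * π ^ 3)) * N ^ 3| := abs_sub_le _ _ _
    _ ≤ 8*(N/π)*H + N*L*(1/27) := add_le_add key1 key2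
    _ ≤ (16/3)*(N*L) + N*L*(1/27) := by linarith
    _ ≤ 6 * N * L := by linarith
end

section
/- There exists a constant C > 0 such that for every even integer n ≥ 4, |∑_{j=0}^{n/2−1} csc⁵((2j+1)π/n) − (93ζ(5)/(48π⁵))·n⁵| ≤ C·n³. -/
open Real Finset

section CscHelpers

lemma cscA {x : ℝ} (hx : 0 < x) (hx2 : x ≤ π/2) :
    0 ≤ (1/Real.sin x)^5 - 1/x^5 ∧ (1/Real.sin x)^5 - 1/x^5 ≤ 40 / x^3 := by
  have hs0 : 0 < Real.sin x := Real.sin_pos_of_pos_of_lt_pi hx (lt_of_le_of_lt hx2 (by linarith [pi_pos]))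
  have hsx : Real.sin x ≤ x := Real.sin_le hx.le
  constructor
  · have h1 : 1/x ≤ 1/Real.sin x := by
      apply one_div_le_one_div_of_le hs0 hsx
    have := pow_le_pow_left₀ (by positivity) h1 5
    simp only [div_pow, one_pow] at this ⊢
    linarith
  rcases le_or_gt x 1 with h1 | h1
  · -- small x : use sin x > x - x^3/4
    set s := Real.sin x with hs
    have hlow : x - x^3/4 ≤ s := by have := Real.sin_gt_sub_cube hx; linarith [pow_pos hx 3]
    have hxsq : x^2 ≤ 1 := by nlinarith
    have hxc : x^3 ≤ x := by nlinarith [mul_le_mul_of_nonneg_left hxsq hx.le]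
    have hlow2 : (3/4)*x ≤ s := by nlinarith
    have hfac : x^5 - s^5 = (x - s)*(x^4 + x^3*s + x^2*s^2 + x*s^3 + s^4) := by ring
    have hpows : s^2 ≤ x^2 := by nlinarith
    have hpows3 : s^3 ≤ x^3 := by nlinarith
    have hpows4 : s^4 ≤ x^4 := by nlinarith
    have hbig : x^4 + x^3*s + x^2*s^2 + x*s^3 + s^4 ≤ 5*x^4 := by nlinarith [pow_nonneg hx.le 3, pow_nonneg hx.le 2]
    have hnum : x^5 - s^5 ≤ (5/4) * x^7 := by
      calc x^5 - s^5 = (x - s)*(x^4 + x^3*s + x^2*s^2 + x*s^3 + s^4) := hfac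
        _ ≤ (x^3/4) * (5*x^4) := by
            apply mul_le_mul (by nlinarith) hbig (by positivity) (by positivity)
        _ = (5/4) * x^7 := by ring
    have hden : x^5/5 ≤ s^5 := by
      have := pow_le_pow_left₀ (by positivity : (0:ℝ) ≤ (3/4)*x) hlow2 5
      nlinarith [pow_pos hx 5]
    have key : (1:ℝ)/s^5 - 1/x^5 ≤ 40 / x^3 := by
      rw [div_sub_div _ _ (by positivity : s^5 ≠ 0) (by positivity : x^5 ≠ 0)]
      rw [div_le_div_iff₀ (by positivity) (by positivity)]
      have hx10 : (0:ℝ) < x^5 * x^5 := by positivity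
      nlinarith [pow_pos hx 3, pow_pos hx 5, mul_pos (pow_pos hx 5) (pow_pos hx 5)]
    simpa [div_pow] using key
  · -- large x : use Jordan
    have hjor : 2/π * x ≤ Real.sin x := Real.mul_le_sin hx.le hx2
    have hπ : π < 3.15 := pi_lt_d2
    have hπ0 : 0 < π := pi_pos
    have hsl : 2/π ≤ Real.sin x := by
      have : 2/π * 1 ≤ 2/π * x := by
        apply mul_le_mul_of_nonneg_left h1.le (by positivity)
      linarith
    have hinv : 1/Real.sin x ≤ π/2 := by
      rw [div_le_div_iff₀ hs0 (by norm_num)]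
      rw [div_le_iff₀ hπ0] at hsl
      linarith
    have h5 : (1/Real.sin x)^5 ≤ (π/2)^5 := pow_le_pow_left₀ (by positivity) hinv 5
    have hhalf : π/2 ≤ 1.575 := by linarith
    have hb : (π/2)^5 ≤ 10 := by
      calc (π/2)^5 ≤ (1.575:ℝ)^5 := pow_le_pow_left₀ (by positivity) hhalf 5
        _ ≤ 10 := by norm_num
    have hx3 : x^3 ≤ 4 := by
      calc x^3 ≤ (1.575:ℝ)^3 := pow_le_pow_left₀ hx.le (by linarith) 3
        _ ≤ 4 := by norm_num
    have h40 : (10:ℝ) ≤ 40/x^3 := by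
      rw [le_div_iff₀ (by positivity)]
      linarith
    have : 0 < 1/x^5 := by positivity
    linarith


lemma cscB1 {x y : ℝ} (hx : 0 < x) (hx2 : x ≤ π/2) (hy : 0 < y) (hxy : x + y = π) :
    |(1/Real.sin x)^5 - (1/x^5 + 1/y^5)| ≤ 40 * (1/x^3 + 1/y^3) := by
  obtain ⟨h0, h1⟩ := cscA hx hx2
  have hy2 : π/2 ≤ y := by linarith
  have hy1 : 1 ≤ y := by nlinarith [pi_gt_three]
  have hy5 : 1/y^5 ≤ 1/y^3 := by
    apply one_div_le_one_div_of_le (by positivity)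
    calc y^3 = y^3 * 1 := by ring
      _ ≤ y^3 * y^2 := by nlinarith [pow_pos hy 3, sq_nonneg (y-1)]
      _ = y^5 := by ring
  have habs : |(1/Real.sin x)^5 - (1/x^5 + 1/y^5)| ≤ |(1/Real.sin x)^5 - 1/x^5| + |1/y^5| := by
    have : (1/Real.sin x)^5 - (1/x^5 + 1/y^5) = ((1/Real.sin x)^5 - 1/x^5) - 1/y^5 := by ring
    rw [this]
    exact abs_sub _ _
  have h2 : |(1/Real.sin x)^5 - 1/x^5| ≤ 40/x^3 := by rw [abs_of_nonneg h0]; exact h1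
  have h3 : |1/y^5| = 1/y^5 := abs_of_nonneg (by positivity)
  have hx3 : 0 < 1/x^3 := by positivity
  have hy3 : 0 < 1/y^3 := by positivity
  calc |(1/Real.sin x)^5 - (1/x^5 + 1/y^5)| ≤ 40/x^3 + 1/y^5 := by
        rw [h3] at habs; linarith
    _ ≤ 40 * (1/x^3 + 1/y^3) := by
        have hr : 40/x^3 = 40*(1/x^3) := by ring
        linarith

lemma cscB {x : ℝ} (hx : 0 < x) (hxp : x < π) :
    |(1/Real.sin x)^5 - (1/x^5 + 1/(π - x)^5)| ≤ 40 * (1/x^3 + 1/(π - x)^3) := by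
  rcases le_or_gt x (π/2) with h | h
  · exact cscB1 hx h (by linarith) (by ring)
  · have h1 := cscB1 (x := π - x) (y := x) (by linarith) (by linarith) hx (by ring)
    rw [Real.sin_pi_sub] at h1
    calc |(1/Real.sin x)^5 - (1/x^5 + 1/(π - x)^5)|
        = |(1/Real.sin x)^5 - (1/(π-x)^5 + 1/x^5)| := by ring_nf
      _ ≤ 40 * (1/(π-x)^3 + 1/x^3) := h1
      _ = 40 * (1/x^3 + 1/(π - x)^3) := by ring

lemma sum_invsq (m : ℕ) : ∑ j ∈ Finset.range m, (1 / ((j:ℝ)+1)^2) ≤ 2 - 2/((m:ℝ)+1) := by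
  induction m with
  | zero => norm_num
  | succ m ih =>
    rw [Finset.sum_range_succ]
    have h1 : (0:ℝ) < (m:ℝ) + 1 := by positivity
    have h2 : (0:ℝ) < (m:ℝ) + 2 := by positivity
    have key : (1:ℝ)/((m:ℝ)+1)^2 ≤ 2/((m:ℝ)+1) - 2/((m:ℝ)+2) := by
      rw [div_sub_div _ _ (ne_of_gt h1) (ne_of_gt h2), div_le_div_iff₀ (by positivity) (by positivity)]
      ring_nf
      nlinarith
    push_cast
    have : ((m:ℝ) + 1) + 1 = (m:ℝ) + 2 := by ring
    rw [this]
    linarith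

lemma cube_term_le (j : ℕ) : (1:ℝ)/(2*(j:ℝ)+1)^3 ≤ 1/((j:ℝ)+1)^2 := by
  apply one_div_le_one_div_of_le (by positivity)
  have hj : (0:ℝ) ≤ (j:ℝ) := j.cast_nonneg
  nlinarith [sq_nonneg ((j:ℝ)+1), pow_nonneg hj 3]

lemma sum_cube_le (m : ℕ) : ∑ j ∈ Finset.range m, (1:ℝ)/(2*(j:ℝ)+1)^3 ≤ 2 := by
  calc ∑ j ∈ Finset.range m, (1:ℝ)/(2*(j:ℝ)+1)^3 ≤ ∑ j ∈ Finset.range m, (1/((j:ℝ)+1)^2) :=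
        Finset.sum_le_sum fun j _ => cube_term_le j
    _ ≤ 2 - 2/((m:ℝ)+1) := sum_invsq m
    _ ≤ 2 := by
        have h : (0:ℝ) < 2/((m:ℝ)+1) := by positivity
        linarith

lemma summable_base : Summable (fun k : ℕ => (1:ℝ)/((k:ℝ)+1)^5) := by
  have := (summable_nat_add_iff (f := fun n : ℕ => (1:ℝ)/(n:ℝ)^5) 1).2
    (summable_one_div_nat_pow.2 (by norm_num))
  simpa [add_comm] using this

lemma fifth_term_le (j : ℕ) : (1:ℝ)/(2*(j:ℝ)+1)^5 ≤ 1/((j:ℝ)+1)^2 := by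
  apply one_div_le_one_div_of_le (by positivity)
  have hj : (0:ℝ) ≤ (j:ℝ) := j.cast_nonneg
  nlinarith [sq_nonneg ((j:ℝ)+1), pow_nonneg hj 3, pow_nonneg hj 4, pow_nonneg hj 5]

lemma summable_sq : Summable (fun k : ℕ => (1:ℝ)/((k:ℝ)+1)^2) := by
  have := (summable_nat_add_iff (f := fun n : ℕ => (1:ℝ)/(n:ℝ)^2) 1).2
    (summable_one_div_nat_pow.2 (by norm_num))
  simpa [add_comm] using this

lemma summable_odd5 : Summable (fun j : ℕ => (1:ℝ)/(2*(j:ℝ)+1)^5) :=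
  Summable.of_nonneg_of_le (fun j => by positivity) fifth_term_le summable_sq

lemma Lval : (∑' j : ℕ, (1:ℝ)/(2*(j:ℝ)+1)^5)
    = 31/32 * (∑' k : ℕ, (1:ℝ)/((k:ℝ)+1)^5) := by
  set Z := (∑' k : ℕ, (1:ℝ)/((k:ℝ)+1)^5) with hZ
  have hg : Summable (fun k : ℕ => (1:ℝ)/((k:ℝ)+1)^5) := summable_base
  have he : Summable (fun j : ℕ => (1:ℝ)/(((2*j : ℕ):ℝ)+1)^5) := by
    apply Summable.of_nonneg_of_le (fun j => by positivity) _ summable_sq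
    intro j
    push_cast
    exact fifth_term_le j
  have ho : Summable (fun j : ℕ => (1:ℝ)/(((2*j+1 : ℕ):ℝ)+1)^5) := by
    apply Summable.of_nonneg_of_le (fun j => by positivity) _ summable_sq
    intro j
    apply one_div_le_one_div_of_le (by positivity)
    have hj : (0:ℝ) ≤ (j:ℝ) := j.cast_nonneg
    push_cast
    nlinarith [pow_nonneg hj 3, pow_nonneg hj 4, pow_nonneg hj 5, sq_nonneg ((j:ℝ)+1)]
  have hsplit := tsum_even_add_odd (f := fun k : ℕ => (1:ℝ)/((k:ℝ)+1)^5) he ho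
  have h1 : (∑' j : ℕ, (1:ℝ)/(((2*j : ℕ):ℝ)+1)^5) = ∑' j : ℕ, (1:ℝ)/(2*(j:ℝ)+1)^5 := by
    apply tsum_congr; intro j; push_cast; ring_nf
  have h2 : (∑' j : ℕ, (1:ℝ)/(((2*j+1 : ℕ):ℝ)+1)^5) = (1/32) * Z := by
    rw [hZ, ← tsum_mul_left]
    apply tsum_congr; intro j
    push_cast
    have : (2*(j:ℝ)+1+1)^5 = 32 * ((j:ℝ)+1)^5 := by ring
    rw [this]
    field_simp
  rw [h1, h2] at hsplit
  linarith

lemma tail_le {m : ℕ} (hm : 1 ≤ m) :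
    (∑' i : ℕ, (1:ℝ)/(2*(((i:ℝ))+(m:ℝ))+1)^5) ≤ 1/(m:ℝ)^2 := by
  apply Real.tsum_le_of_sum_range_le (fun i => by positivity)
  intro N
  have key : ∀ i : ℕ, (1:ℝ)/(2*(((i:ℝ))+(m:ℝ))+1)^5
      ≤ 1/((i:ℝ)+(m:ℝ))^2 - 1/(((i+1:ℕ):ℝ)+(m:ℝ))^2 := by
    intro i
    set k : ℝ := (i:ℝ) + (m:ℝ) with hk
    have hm' : (1:ℝ) ≤ (m:ℝ) := by exact_mod_cast hm
    have hi : (0:ℝ) ≤ (i:ℝ) := i.cast_nonneg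
    have hk1 : 1 ≤ k := by rw [hk]; linarith
    have hk0 : 0 < k := by linarith
    have heq : ((i+1:ℕ):ℝ)+(m:ℝ) = k + 1 := by rw [hk]; push_cast; ring
    rw [heq]
    rw [div_sub_div _ _ (by positivity : k^2 ≠ 0) (by positivity : (k+1)^2 ≠ 0)]
    rw [div_le_div_iff₀ (by positivity) (by positivity)]
    have h1 : k*(k+1) ≤ (2*k+1)^2 := by nlinarith
    have h2 : (2*k+1)^2 ≤ (2*k+1)^3 := by nlinarith
    nlinarith [sq_nonneg (2*k+1), pow_pos (by linarith : (0:ℝ) < 2*k+1) 2, pow_pos (by linarith : (0:ℝ) < 2*k+1) 3, sq_nonneg (k*(k+1))]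
  calc ∑ i ∈ Finset.range N, (1:ℝ)/(2*(((i:ℝ))+(m:ℝ))+1)^5
      ≤ ∑ i ∈ Finset.range N, ((1:ℝ)/((i:ℝ)+(m:ℝ))^2 - 1/(((i+1:ℕ):ℝ)+(m:ℝ))^2) :=
        Finset.sum_le_sum fun i _ => key i
    _ = 1/(((0:ℕ):ℝ)+(m:ℝ))^2 - 1/((N:ℝ)+(m:ℝ))^2 := by
        exact Finset.sum_range_sub' (f := fun i : ℕ => (1:ℝ)/((i:ℝ)+(m:ℝ))^2) N
    _ ≤ 1/(m:ℝ)^2 := by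
        have : (0:ℝ) < 1/((N:ℝ)+(m:ℝ))^2 := by
          have : (0:ℝ) < (m:ℝ) := by exact_mod_cast hm
          positivity
        rw [Nat.cast_zero, zero_add]
        linarith

end CscHelpers



set_option maxHeartbeats 2000000 in
theorem csc_fifth_odd_sum_asymptotic :
    ∃ C : ℝ, 0 < C ∧ ∀ n : ℕ, Even n → 4 ≤ n →
      |(∑ j ∈ Finset.range (n / 2), (1 / Real.sin ((2 * j + 1) * π / n)) ^ 5) -
          (93 * (∑' k : ℕ, 1 / ((k : ℝ) + 1) ^ 5) / (48 * π ^ 5)) * n ^ 5| ≤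
        C * n ^ 3 := by
  refine ⟨200, by norm_num, ?_⟩
  intro n hev hn4
  obtain ⟨m, hm⟩ := hev
  have hmn : n = 2 * m := by omega
  have hm2 : 2 ≤ m := by omega
  have hnd : n / 2 = m := by omega
  have hπ : (0:ℝ) < π := pi_pos
  have hπ1 : (1:ℝ) ≤ π := by linarith [pi_gt_three]
  have hπ3 : (1:ℝ) ≤ π^3 := one_le_pow₀ hπ1
  have hπ5 : (1:ℝ) ≤ π^5 := one_le_pow₀ hπ1
  have hnR : (0:ℝ) < (n:ℝ) := by exact_mod_cast (by omega : 0 < n)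
  have hnR' : (n:ℝ) ≠ 0 := ne_of_gt hnR
  have hmR : (0:ℝ) < (m:ℝ) := by exact_mod_cast (by omega : 0 < m)
  have hnm : (n:ℝ) = 2*(m:ℝ) := by exact_mod_cast hmn
  rw [hnd]
  set Z := ∑' k : ℕ, 1 / ((k : ℝ) + 1) ^ 5 with hZ
  -- basic facts about the points
  have hx0 : ∀ j : ℕ, (0:ℝ) < (2 * (j:ℝ) + 1) * π / n := by
    intro j; positivity
  have hxπ : ∀ j ∈ Finset.range m, (2 * (j:ℝ) + 1) * π / n < π := by
    intro j hj
    have hj' : j < m := Finset.mem_range.1 hj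
    rw [div_lt_iff₀ hnR]
    have hj2 : (j:ℝ) + 1 ≤ (m:ℝ) := by exact_mod_cast hj'
    have : 2 * (j:ℝ) + 1 < (n:ℝ) := by rw [hnm]; linarith
    nlinarith
  -- per-term power rescaling
  have hterm : ∀ (p : ℕ) (j : ℕ), (1:ℝ)/((2 * (j:ℝ) + 1) * π / n)^p
      = ((n:ℝ)^p/π^p) * (1/(2*(j:ℝ)+1)^p) := by
    intro p j
    have h1 : (2*(j:ℝ)+1) ≠ 0 := by positivity
    rw [div_pow, mul_pow, one_div_div, div_mul_div_comm, mul_one, mul_comm (π^p)]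
  -- reflection identity
  have hrefl : ∀ p : ℕ, ∑ j ∈ Finset.range m, (1:ℝ)/(π - (2 * (j:ℝ) + 1) * π / n)^p
      = ∑ j ∈ Finset.range m, (1:ℝ)/((2 * (j:ℝ) + 1) * π / n)^p := by
    intro p
    rw [← Finset.sum_range_reflect (fun j => (1:ℝ)/((2 * (j:ℝ) + 1) * π / n)^p) m]
    apply Finset.sum_congr rfl
    intro j hj
    have hj' : j < m := Finset.mem_range.1 hj
    have hcast : ((m - 1 - j : ℕ):ℝ) = (m:ℝ) - 1 - (j:ℝ) := by
      have h1 : j ≤ m - 1 := by omega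
      have h2 : 1 ≤ m := by omega
      push_cast [Nat.cast_sub h1, Nat.cast_sub h2]
      ring
    show (1:ℝ)/(π - (2 * (j:ℝ) + 1) * π / n)^p = 1/((2 * ((m - 1 - j : ℕ):ℝ) + 1) * π / n)^p
    rw [hcast]
    congr 2
    rw [hnm]
    field_simp
    ring
  -- sums of powers
  set T3 := ∑ j ∈ Finset.range m, (1:ℝ)/(2*(j:ℝ)+1)^3 with hT3
  set T5 := ∑ j ∈ Finset.range m, (1:ℝ)/(2*(j:ℝ)+1)^5 with hT5
  have hS3 : ∑ j ∈ Finset.range m, (1:ℝ)/((2 * (j:ℝ) + 1) * π / n)^3 = ((n:ℝ)^3/π^3) * T3 := by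
    rw [hT3, Finset.mul_sum]
    exact Finset.sum_congr rfl fun j _ => hterm 3 j
  have hS5 : ∑ j ∈ Finset.range m, (1:ℝ)/((2 * (j:ℝ) + 1) * π / n)^5 = ((n:ℝ)^5/π^5) * T5 := by
    rw [hT5, Finset.mul_sum]
    exact Finset.sum_congr rfl fun j _ => hterm 5 j
  -- step 1 : |A - 2 (n^5/π^5) T5| ≤ 160 n^3
  set A := ∑ j ∈ Finset.range m, ((1:ℝ) / Real.sin ((2 * (j:ℝ) + 1) * π / n)) ^ 5 with hA
  have step1 : |A - 2*((n:ℝ)^5/π^5)*T5| ≤ 160 * (n:ℝ)^3 := by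
    have hAB : A - 2*((n:ℝ)^5/π^5)*T5
        = ∑ j ∈ Finset.range m, (((1:ℝ) / Real.sin ((2 * (j:ℝ) + 1) * π / n)) ^ 5
            - (1/((2 * (j:ℝ) + 1) * π / n)^5 + 1/(π - (2 * (j:ℝ) + 1) * π / n)^5)) := by
      rw [Finset.sum_sub_distrib, Finset.sum_add_distrib, hrefl 5, hS5, hA]
      ring
    rw [hAB]
    calc |∑ j ∈ Finset.range m, (((1:ℝ) / Real.sin ((2 * (j:ℝ) + 1) * π / n)) ^ 5
            - (1/((2 * (j:ℝ) + 1) * π / n)^5 + 1/(π - (2 * (j:ℝ) + 1) * π / n)^5))|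
        ≤ ∑ j ∈ Finset.range m, |((1:ℝ) / Real.sin ((2 * (j:ℝ) + 1) * π / n)) ^ 5
            - (1/((2 * (j:ℝ) + 1) * π / n)^5 + 1/(π - (2 * (j:ℝ) + 1) * π / n)^5)| :=
          Finset.abs_sum_le_sum_abs _ _
      _ ≤ ∑ j ∈ Finset.range m, 40 * ((1:ℝ)/((2 * (j:ℝ) + 1) * π / n)^3
            + 1/(π - (2 * (j:ℝ) + 1) * π / n)^3) := by
          apply Finset.sum_le_sum
          intro j hj
          exact cscB (hx0 j) (hxπ j hj)
      _ = 40 * (∑ j ∈ Finset.range m, (1:ℝ)/((2 * (j:ℝ) + 1) * π / n)^3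
            + ∑ j ∈ Finset.range m, (1:ℝ)/(π - (2 * (j:ℝ) + 1) * π / n)^3) := by
          rw [← Finset.sum_add_distrib, ← Finset.mul_sum]
      _ = 40 * (((n:ℝ)^3/π^3) * T3 + ((n:ℝ)^3/π^3) * T3) := by
          rw [hrefl 3, hS3]
      _ ≤ 160 * (n:ℝ)^3 := by
          have h1 : T3 ≤ 2 := sum_cube_le m
          have h0 : 0 ≤ T3 := by
            rw [hT3]; exact Finset.sum_nonneg (fun j _ => by positivity)
          have h2 : ((n:ℝ)^3/π^3) * T3 ≤ (n:ℝ)^3 * 2 := by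
            have : ((n:ℝ)^3/π^3) ≤ (n:ℝ)^3 := by
              rw [div_le_iff₀ (by positivity)]
              nlinarith [pow_pos hnR 3]
            calc ((n:ℝ)^3/π^3) * T3 ≤ (n:ℝ)^3 * T3 := by
                  apply mul_le_mul_of_nonneg_right this h0
              _ ≤ (n:ℝ)^3 * 2 := by
                  apply mul_le_mul_of_nonneg_left h1 (by positivity)
          linarith
  -- step 2 : |2 (n^5/π^5) T5 - target| ≤ 8 n^3
  have hLT : T5 + (∑' i : ℕ, (1:ℝ)/(2*((i:ℝ)+(m:ℝ))+1)^5)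
      = ∑' j : ℕ, (1:ℝ)/(2*(j:ℝ)+1)^5 := by
    have := Summable.sum_add_tsum_nat_add (f := fun j : ℕ => (1:ℝ)/(2*(j:ℝ)+1)^5) m summable_odd5
    rw [← this, hT5]
    congr 1
    apply tsum_congr
    intro i
    push_cast
    ring_nf
  set tail := ∑' i : ℕ, (1:ℝ)/(2*((i:ℝ)+(m:ℝ))+1)^5 with htail
  have htail0 : 0 ≤ tail := by
    rw [htail]
    apply tsum_nonneg
    intro i; positivity
  have htail1 : tail ≤ 1/(m:ℝ)^2 := tail_le (by omega)
  have htarget : (93 * Z / (48 * π ^ 5)) * (n:ℝ) ^ 5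
      = 2*((n:ℝ)^5/π^5) * (31/32 * Z) := by
    field_simp
    ring
  have step2 : |2*((n:ℝ)^5/π^5)*T5 - (93 * Z / (48 * π ^ 5)) * (n:ℝ) ^ 5| ≤ 8 * (n:ℝ)^3 := by
    rw [htarget]
    have hT5L : T5 = 31/32 * Z - tail := by
      rw [← Lval]
      linarith [hLT]
    rw [hT5L]
    have hfac : 2*((n:ℝ)^5/π^5)*(31/32 * Z - tail) - 2*((n:ℝ)^5/π^5) * (31/32 * Z)
        = -(2*((n:ℝ)^5/π^5)*tail) := by ring
    rw [hfac, abs_neg, abs_of_nonneg (by positivity)]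
    have hdiv : (n:ℝ)^5/π^5 ≤ (n:ℝ)^5 := by
      rw [div_le_iff₀ (by positivity)]
      nlinarith [pow_pos hnR 5]
    have h1 : 2*((n:ℝ)^5/π^5)*tail ≤ 2*(n:ℝ)^5*tail := by
      apply mul_le_mul_of_nonneg_right _ htail0
      linarith
    have h2 : 2*(n:ℝ)^5*tail ≤ 2*(n:ℝ)^5*(1/(m:ℝ)^2) := by
      apply mul_le_mul_of_nonneg_left htail1 (by positivity)
    have h3 : 2*(n:ℝ)^5*(1/(m:ℝ)^2) = 8*(n:ℝ)^3 := by
      rw [hnm]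
      field_simp
      ring
    linarith
  -- combine
  calc |A - (93 * Z / (48 * π ^ 5)) * (n:ℝ) ^ 5|
      ≤ |A - 2*((n:ℝ)^5/π^5)*T5| + |2*((n:ℝ)^5/π^5)*T5 - (93 * Z / (48 * π ^ 5)) * (n:ℝ) ^ 5| := by
        have := abs_sub_le A (2*((n:ℝ)^5/π^5)*T5) ((93 * Z / (48 * π ^ 5)) * (n:ℝ) ^ 5)
        linarith
    _ ≤ 160 * (n:ℝ)^3 + 8 * (n:ℝ)^3 := add_le_add step1 step2
    _ ≤ 200 * (n:ℝ)^3 := by nlinarith [pow_pos hnR 3]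
end

section
/- There exists a constant C > 0 such that for every even integer n ≥ 4, |∑_{j=1}^{n/2−1} csc³(2jπ/n) − (ζ(3)/(4π³))·n³| ≤ C·n·log n. -/
open Real Finset


lemma key1 {θ : ℝ} (h0 : 0 < θ) (h2 : θ ≤ π/2) :
    |(1/Real.sin θ)^3 - 1/θ^3| ≤ 9/θ := by
  have hπ := Real.pi_pos
  have hπ315 := Real.pi_lt_d2
  have hπ31 := Real.pi_gt_d6
  have hθπ : θ < π := lt_of_le_of_lt h2 (by linarith)
  have hs : 0 < Real.sin θ := Real.sin_pos_of_pos_of_lt_pi h0 hθπ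
  have hsle : Real.sin θ ≤ θ := Real.sin_le h0.le
  have hsge : 2/π * θ ≤ Real.sin θ := Real.mul_le_sin h0.le h2
  have hnonneg : 0 ≤ (1/Real.sin θ)^3 - 1/θ^3 := by
    have h1 : 1/θ^3 ≤ 1/(Real.sin θ)^3 := by
      apply one_div_le_one_div_of_le (by positivity)
      exact pow_le_pow_left₀ hs.le hsle 3
    calc (0:ℝ) ≤ 1/(Real.sin θ)^3 - 1/θ^3 := by linarith
    _ = (1/Real.sin θ)^3 - 1/θ^3 := by rw [div_pow, one_pow]
  rw [abs_of_nonneg hnonneg, sub_le_iff_le_add, div_pow, one_pow,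
    div_le_iff₀ (by positivity)]
  rcases le_or_gt θ 1 with hθ1 | hθ1
  · have hcube : θ - θ^3/4 < Real.sin θ := by
      have := Real.sin_gt_sub_cube h0; nlinarith [pow_pos h0 3]
    have e1 : (9/θ + 1/θ^3) * Real.sin θ^3 = (1 + 9*θ^2) * (Real.sin θ/θ)^3 := by
      field_simp; ring
    rw [e1]
    have hq : 1 - θ^2/4 < Real.sin θ / θ := by
      rw [lt_div_iff₀ h0]; nlinarith
    have hq1 : Real.sin θ / θ ≤ 1 := by
      rw [div_le_one h0]; exact hsle
    have hq0 : 0 < Real.sin θ / θ := by positivity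
    have hc3 : (1 - θ^2/4)^3 < (Real.sin θ/θ)^3 := by
      apply pow_lt_pow_left₀ hq (by nlinarith) (by norm_num)
    have hprod : (1+9*θ^2)*(1-θ^2/4)^3 < (1+9*θ^2)*(Real.sin θ/θ)^3 :=
      mul_lt_mul_of_pos_left hc3 (by positivity)
    have hu1 : θ^2 ≤ 1 := pow_le_one₀ h0.le hθ1 (n := 2)
    nlinarith [hprod, sq_nonneg θ, sq_nonneg (θ^2), sq_nonneg (θ^3),
      mul_nonneg (sq_nonneg θ) (sub_nonneg.2 hu1),
      mul_nonneg (mul_nonneg (sq_nonneg θ) (sq_nonneg θ)) (sub_nonneg.2 hu1)]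
  · have h2π : (2:ℝ)/π ≤ Real.sin θ := by
      calc (2:ℝ)/π = 2/π * 1 := by ring
      _ ≤ 2/π * θ := by
        apply mul_le_mul_of_nonneg_left hθ1.le (by positivity)
      _ ≤ _ := hsge
    have hcub : (2/π)^3 ≤ Real.sin θ^3 := pow_le_pow_left₀ (by positivity) h2π 3
    have h9 : 9/(π/2) ≤ 9/θ := by
      apply div_le_div_of_nonneg_left (by norm_num) h0 h2
    have hθ3 : (0:ℝ) < 1/θ^3 := by positivity
    have hmain : (9/(π/2)) * (2/π)^3 ≤ (9/θ + 1/θ^3) * Real.sin θ^3 := by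
      apply mul_le_mul (by linarith) hcub (by positivity) (by positivity)
    refine le_trans ?_ hmain
    rw [div_pow, div_mul_div_comm, le_div_iff₀ (by positivity)]
    have hπ2 : π^2 < 9.9225 := by nlinarith
    nlinarith [hπ2, hπ]


lemma key2 {θ : ℝ} (h0 : 0 < θ) (h2 : θ ≤ π/2) :
    |(1/Real.sin θ)^3 - (1/θ^3 + 1/(π-θ)^3)| ≤ 10/θ := by
  have hπ := Real.pi_pos
  have hπ315 := Real.pi_lt_d2
  have hπ31 := Real.pi_gt_d6
  have hπθ : π/2 ≤ π - θ := by linarith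
  have hπθ0 : 0 < π - θ := by linarith
  have h1 := key1 h0 h2
  have h2' : (0:ℝ) < 1/(π-θ)^3 := by positivity
  have h3 : 1/(π-θ)^3 ≤ 1/(π/2)^3 := by
    apply one_div_le_one_div_of_le (by positivity)
    exact pow_le_pow_left₀ (by positivity) hπθ 3
  have h4 : 1/(π/2)^3 ≤ 1/θ := by
    rw [div_le_div_iff₀ (by positivity) h0]
    nlinarith [sq_nonneg π]
  calc |(1/Real.sin θ)^3 - (1/θ^3 + 1/(π-θ)^3)|
      ≤ |(1/Real.sin θ)^3 - 1/θ^3| + |1/(π-θ)^3| := by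
        have e : (1/Real.sin θ)^3 - (1/θ^3 + 1/(π-θ)^3)
            = ((1/Real.sin θ)^3 - 1/θ^3) + (-(1/(π-θ)^3)) := by ring
        rw [e]
        exact (abs_add_le _ _).trans (by rw [abs_neg])
    _ ≤ 9/θ + 1/θ := by
        rw [abs_of_pos h2']
        exact add_le_add h1 (h3.trans h4)
    _ = 10/θ := by ring

lemma key3 {θ : ℝ} (h0 : 0 < θ) (h2 : θ < π) :
    |(1/Real.sin θ)^3 - (1/θ^3 + 1/(π-θ)^3)| ≤ 10/θ + 10/(π-θ) := by
  have hπθ0 : 0 < π - θ := by linarith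
  rcases le_or_gt θ (π/2) with h | h
  · have := key2 h0 h
    have : (0:ℝ) < 10/(π-θ) := by positivity
    linarith [key2 h0 h]
  · have h0' : 0 < π - θ := hπθ0
    have h2' : π - θ ≤ π/2 := by linarith
    have := key2 h0' h2'
    rw [Real.sin_pi_sub] at this
    have e : π - (π - θ) = θ := by ring
    rw [e] at this
    have : |(1/Real.sin θ)^3 - (1/θ^3 + 1/(π-θ)^3)| ≤ 10/(π-θ) := by
      calc |(1/Real.sin θ)^3 - (1/θ^3 + 1/(π-θ)^3)|
          = |(1/Real.sin θ)^3 - (1/(π-θ)^3 + 1/θ^3)| := by ring_nf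
      _ ≤ 10/(π-θ) := this
    have h10 : (0:ℝ) < 10/θ := by positivity
    linarith


lemma sum_reflect (m : ℕ) (f : ℕ → ℝ) :
    ∑ j ∈ Icc 1 (m-1), f (m - j) = ∑ j ∈ Icc 1 (m-1), f j := by
  apply Finset.sum_nbij' (fun j => m - j) (fun j => m - j)
  · intro a ha; simp only [Finset.mem_Icc] at *; omega
  · intro a ha; simp only [Finset.mem_Icc] at *; omega
  · intro a ha; simp only [Finset.mem_Icc] at ha; omega
  · intro a ha; simp only [Finset.mem_Icc] at ha; omega
  · intro a ha; rfl

lemma harm_bound : ∀ N : ℕ, 1 ≤ N → ∑ j ∈ Icc 1 N, (1:ℝ)/j ≤ 1 + Real.log N := by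
  intro N
  induction N with
  | zero => omega
  | succ n ih =>
    intro _
    rcases Nat.eq_or_lt_of_le (Nat.one_le_iff_ne_zero.mpr (Nat.succ_ne_zero n)) with h | h
    · have hn0 : n = 0 := by omega
      subst hn0
      norm_num
    · have hn : 1 ≤ n := by omega
      rw [← Finset.insert_Icc_right_eq_Icc_add_one (by omega), Finset.sum_insert (by simp)]
      have hlog : (1:ℝ)/(n+1) ≤ Real.log (n+1) - Real.log n := by
        have hn0 : (0:ℝ) < n := by exact_mod_cast hn
        have h1 : Real.log ((n:ℝ)/(n+1)) ≤ (n:ℝ)/(n+1) - 1 :=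
          Real.log_le_sub_one_of_pos (by positivity)
        rw [Real.log_div (by positivity) (by positivity)] at h1
        have e : (n:ℝ)/(n+1) - 1 = -(1/(n+1)) := by field_simp; ring
        rw [e] at h1
        linarith
      have := ih hn
      push_cast
      push_cast at hlog this
      linarith


lemma summable_shift (m : ℕ) : Summable (fun k : ℕ => 1/((k:ℝ)+m)^3) := by
  have h : Summable (fun k : ℕ => 1/((k:ℝ))^3) :=
    Real.summable_one_div_nat_pow.mpr (by norm_num)
  have := (summable_nat_add_iff m).mpr h
  apply this.congr
  intro k
  push_cast
  ring_nf

lemma tail_bound (m : ℕ) (hm : 2 ≤ m) :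
    ∑' k : ℕ, 1/((k:ℝ)+m)^3 ≤ 2/(m:ℝ)^2 := by
  have hm1 : (1:ℝ) ≤ (m:ℝ) - 1 := by
    have : (2:ℝ) ≤ m := by exact_mod_cast hm
    linarith
  have hmr : (0:ℝ) < m := by linarith
  set g : ℕ → ℝ := fun k => 1/((k:ℝ)+m-1) with hg
  apply Real.tsum_le_of_sum_range_le (fun k => by positivity)
  intro K
  have hterm : ∀ k : ℕ, 1/((k:ℝ)+m)^3 ≤ (1/(m:ℝ)) * (g k - g (k+1)) := by
    intro k
    have h1 : (1:ℝ) ≤ (k:ℝ)+m-1 := by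
      have : (0:ℝ) ≤ k := Nat.cast_nonneg k
      linarith
    have h2 : (0:ℝ) < (k:ℝ)+m := by linarith
    have e : g k - g (k+1) = 1/(((k:ℝ)+m-1)*((k:ℝ)+m)) := by
      simp only [hg]
      push_cast
      rw [div_sub_div _ _ (by linarith) (by linarith)]
      ring_nf
    rw [e, mul_one_div, div_div, div_le_div_iff₀ (by positivity) (by positivity)]
    nlinarith [mul_pos h2 h2, mul_nonneg (Nat.cast_nonneg (α := ℝ) k) (Nat.cast_nonneg (α := ℝ) k),
      mul_nonneg (Nat.cast_nonneg (α := ℝ) k) hmr.le]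
  calc ∑ k ∈ range K, 1/((k:ℝ)+m)^3
      ≤ ∑ k ∈ range K, (1/(m:ℝ)) * (g k - g (k+1)) :=
        Finset.sum_le_sum (fun k _ => hterm k)
    _ = (1/(m:ℝ)) * (g 0 - g K) := by
        rw [← Finset.mul_sum, Finset.sum_range_sub' g K]
    _ ≤ (1/(m:ℝ)) * (1/((m:ℝ)-1)) := by
        have hK : (0:ℝ) ≤ g K := by
          simp only [hg]
          apply div_nonneg (by norm_num)
          have := Nat.cast_nonneg (α := ℝ) K
          linarith
        apply mul_le_mul_of_nonneg_left _ (by positivity)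
        simp only [hg, Nat.cast_zero, zero_add]
        linarith
    _ ≤ 2/(m:ℝ)^2 := by
        rw [one_div_mul_one_div, div_le_div_iff₀ (by nlinarith) (by positivity)]
        nlinarith


lemma zeta_decomp (m : ℕ) (hm : 2 ≤ m) :
    (∑' k : ℕ, 1/((k:ℝ)+1)^3)
      = ∑ j ∈ Icc 1 (m-1), 1/(j:ℝ)^3 + ∑' k : ℕ, 1/((k:ℝ)+m)^3 := by
  have hs : Summable (fun k : ℕ => 1/((k:ℝ)+1)^3) := by
    have := summable_shift 1
    simpa using this
  have h := Summable.sum_add_tsum_nat_add (f := fun k : ℕ => 1/((k:ℝ)+1)^3) (m-1) hs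
  rw [← h]
  congr 1
  · apply Finset.sum_nbij' (fun i => i+1) (fun j => j-1)
    · intro a ha; simp only [Finset.mem_range, Finset.mem_Icc] at *; omega
    · intro a ha; simp only [Finset.mem_range, Finset.mem_Icc] at *; omega
    · intro a ha; omega
    · intro a ha; simp only [Finset.mem_Icc] at ha; omega
    · intro a ha; push_cast; ring_nf
  · apply tsum_congr
    intro k
    have : ((k + (m-1) : ℕ) : ℝ) = (k:ℝ) + m - 1 := by
      have : (1:ℕ) ≤ m := by omega
      push_cast [Nat.cast_sub this]
      ring
    beta_reduce
    rw [this]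
    ring_nf


lemma main_m (m : ℕ) (hm : 2 ≤ m) :
    |(∑ j ∈ Icc 1 (m-1), (1/Real.sin ((j:ℝ)*π/m))^3)
        - 2*((m:ℝ)/π)^3 * (∑' k : ℕ, 1/((k:ℝ)+1)^3)|
      ≤ 20*(m:ℝ)/π * (1 + Real.log ((m:ℕ):ℝ)) + 4*(m:ℝ)/π^3 := by
  have hπ := Real.pi_pos
  have hmr : (2:ℝ) ≤ (m:ℝ) := by exact_mod_cast hm
  set ζ3 : ℝ := ∑' k : ℕ, 1/((k:ℝ)+1)^3 with hζ
  -- per-term facts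
  have hθ : ∀ j ∈ Icc 1 (m-1), (0:ℝ) < (j:ℝ)*π/m ∧ (j:ℝ)*π/m < π := by
    intro j hj
    simp only [Finset.mem_Icc] at hj
    have h1 : (1:ℝ) ≤ (j:ℝ) := by exact_mod_cast hj.1
    have h2 : (j:ℝ) ≤ (m:ℝ) - 1 := by
      have : (j:ℝ) ≤ ((m-1:ℕ):ℝ) := by exact_mod_cast hj.2
      rw [Nat.cast_sub (by omega)] at this
      simpa using this
    constructor
    · positivity
    · rw [div_lt_iff₀ (by linarith)]
      nlinarith
  have hrefl : ∀ j ∈ Icc 1 (m-1), π - (j:ℝ)*π/m = ((m-j:ℕ):ℝ)*π/m := by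
    intro j hj
    simp only [Finset.mem_Icc] at hj
    rw [Nat.cast_sub (by omega)]
    field_simp
  -- G identity
  set g : ℕ → ℝ := fun j => ((m:ℝ)/π)^3 * (1/(j:ℝ)^3) + ((m:ℝ)/π)^3 * (1/((m-j:ℕ):ℝ)^3)
    with hgdef
  have hgval : ∀ j ∈ Icc 1 (m-1),
      1/((j:ℝ)*π/m)^3 + 1/(π - (j:ℝ)*π/m)^3 = g j := by
    intro j hj
    simp only [Finset.mem_Icc] at hj
    have h1 : (1:ℝ) ≤ (j:ℝ) := by exact_mod_cast hj.1
    have h2 : (1:ℝ) ≤ ((m-j:ℕ):ℝ) := by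
      have : (1:ℕ) ≤ m - j := by omega
      exact_mod_cast this
    rw [hrefl j (by simp only [Finset.mem_Icc]; exact hj)]
    simp only [hgdef]
    rw [div_pow, div_pow, div_pow]
    field_simp
  have hGsum : ∑ j ∈ Icc 1 (m-1), g j = 2*((m:ℝ)/π)^3 * ∑ j ∈ Icc 1 (m-1), 1/(j:ℝ)^3 := by
    simp only [hgdef]
    rw [Finset.sum_add_distrib, ← Finset.mul_sum, ← Finset.mul_sum]
    have := sum_reflect m (fun j => 1/(j:ℝ)^3)
    rw [this]
    ring
  -- error bound per term
  have herr : ∀ j ∈ Icc 1 (m-1),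
      |(1/Real.sin ((j:ℝ)*π/m))^3 - g j|
        ≤ 10*(m:ℝ)/π * (1/(j:ℝ)) + 10*(m:ℝ)/π * (1/((m-j:ℕ):ℝ)) := by
    intro j hj
    obtain ⟨h0, h2⟩ := hθ j hj
    have := key3 h0 h2
    rw [hgval j hj] at this
    refine this.trans ?_
    rw [hrefl j hj]
    have hjpos : (0:ℝ) < (j:ℝ) := by
      simp only [Finset.mem_Icc] at hj
      exact_mod_cast hj.1
    have hmjpos : (0:ℝ) < ((m-j:ℕ):ℝ) := by
      simp only [Finset.mem_Icc] at hj
      have : (1:ℕ) ≤ m - j := by omega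
      exact_mod_cast this
    have e1 : 10/((j:ℝ)*π/m) = 10*(m:ℝ)/π * (1/(j:ℝ)) := by
      field_simp
    have e2 : 10/(((m-j:ℕ):ℝ)*π/m) = 10*(m:ℝ)/π * (1/((m-j:ℕ):ℝ)) := by
      field_simp
    rw [e1, e2]
  -- sum of errors
  have hharm := harm_bound (m-1) (by omega)
  have hlogmono : Real.log ((m-1:ℕ):ℝ) ≤ Real.log ((m:ℕ):ℝ) := by
    apply Real.log_le_log (by exact_mod_cast Nat.sub_pos_of_lt (by omega))
    exact_mod_cast Nat.sub_le m 1
  have hE : ∑ j ∈ Icc 1 (m-1), |(1/Real.sin ((j:ℝ)*π/m))^3 - g j|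
      ≤ 20*(m:ℝ)/π * (1 + Real.log ((m:ℕ):ℝ)) := by
    calc ∑ j ∈ Icc 1 (m-1), |(1/Real.sin ((j:ℝ)*π/m))^3 - g j|
        ≤ ∑ j ∈ Icc 1 (m-1), (10*(m:ℝ)/π * (1/(j:ℝ)) + 10*(m:ℝ)/π * (1/((m-j:ℕ):ℝ))) :=
          Finset.sum_le_sum herr
      _ = 20*(m:ℝ)/π * ∑ j ∈ Icc 1 (m-1), 1/(j:ℝ) := by
          rw [Finset.sum_add_distrib, ← Finset.mul_sum, ← Finset.mul_sum]
          rw [sum_reflect m (fun j => 1/(j:ℝ))]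
          ring
      _ ≤ 20*(m:ℝ)/π * (1 + Real.log ((m:ℕ):ℝ)) := by
          apply mul_le_mul_of_nonneg_left _ (by positivity)
          refine hharm.trans ?_
          linarith
  -- tail
  have htail : |2*((m:ℝ)/π)^3 * ∑ j ∈ Icc 1 (m-1), 1/(j:ℝ)^3 - 2*((m:ℝ)/π)^3 * ζ3|
      ≤ 4*(m:ℝ)/π^3 := by
    rw [← mul_sub, abs_mul]
    have h1 : |(2:ℝ)*((m:ℝ)/π)^3| = 2*((m:ℝ)/π)^3 := by
      rw [abs_of_pos (by positivity)]
    rw [h1]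
    have h2 : |∑ j ∈ Icc 1 (m-1), 1/(j:ℝ)^3 - ζ3| ≤ 2/(m:ℝ)^2 := by
      rw [hζ, zeta_decomp m hm]
      have htb := tail_bound m hm
      have hpos : (0:ℝ) ≤ ∑' k : ℕ, 1/((k:ℝ)+m)^3 :=
        tsum_nonneg (fun k => by positivity)
      rw [abs_le]
      constructor <;> [linarith; nlinarith]
    calc 2*((m:ℝ)/π)^3 * |∑ j ∈ Icc 1 (m-1), 1/(j:ℝ)^3 - ζ3|
        ≤ 2*((m:ℝ)/π)^3 * (2/(m:ℝ)^2) := by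
          apply mul_le_mul_of_nonneg_left h2 (by positivity)
      _ = 4*(m:ℝ)/π^3 := by
          rw [div_pow]
          field_simp
          ring
  -- combine
  have htri : |(∑ j ∈ Icc 1 (m-1), (1/Real.sin ((j:ℝ)*π/m))^3) - 2*((m:ℝ)/π)^3 * ζ3|
      ≤ ∑ j ∈ Icc 1 (m-1), |(1/Real.sin ((j:ℝ)*π/m))^3 - g j|
        + |2*((m:ℝ)/π)^3 * ∑ j ∈ Icc 1 (m-1), 1/(j:ℝ)^3 - 2*((m:ℝ)/π)^3 * ζ3| := by
    have e : (∑ j ∈ Icc 1 (m-1), (1/Real.sin ((j:ℝ)*π/m))^3) - 2*((m:ℝ)/π)^3 * ζ3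
        = (∑ j ∈ Icc 1 (m-1), ((1/Real.sin ((j:ℝ)*π/m))^3 - g j))
          + (2*((m:ℝ)/π)^3 * ∑ j ∈ Icc 1 (m-1), 1/(j:ℝ)^3 - 2*((m:ℝ)/π)^3 * ζ3) := by
      rw [Finset.sum_sub_distrib, hGsum]
      ring
    rw [e]
    refine (abs_add_le _ _).trans ?_
    gcongr
    exact Finset.abs_sum_le_sum_abs _ _
  linarith


theorem csc_cubed_even_sum_asymptotic :
    ∃ C : ℝ, 0 < C ∧ ∀ n : ℕ, Even n → 4 ≤ n →
      |(∑ j ∈ Finset.Icc 1 (n / 2 - 1), (1 / Real.sin (2 * j * π / n)) ^ 3) -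
          ((∑' k : ℕ, 1 / ((k : ℝ) + 1) ^ 3) / (4 * π ^ 3)) * n ^ 3| ≤
        C * n * Real.log n := by
  refine ⟨10, by norm_num, ?_⟩
  intro n hev hn
  have hπ := Real.pi_pos
  have hπ31 : (3.14:ℝ) < π := by
    have := Real.pi_gt_d6; linarith
  obtain ⟨m, hm⟩ : ∃ m, n = 2*m := by
    obtain ⟨r, hr⟩ := hev; exact ⟨r, by omega⟩
  have hm2 : 2 ≤ m := by omega
  have hmr : (2:ℝ) ≤ (m:ℝ) := by exact_mod_cast hm2
  have hnr : (n:ℝ) = 2*(m:ℝ) := by rw [hm]; push_cast; ring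
  have hidx : n/2 - 1 = m - 1 := by omega
  -- rewrite the angle
  have hbody : ∀ j ∈ Icc 1 (m-1),
      (1 / Real.sin (2 * (j:ℝ) * π / n)) ^ 3 = (1/Real.sin ((j:ℝ)*π/m))^3 := by
    intro j hj
    have hm0 : ((m:ℕ):ℝ) ≠ 0 := by positivity
    congr 3
    rw [hnr]
    rw [div_eq_div_iff (by positivity) (by positivity)]
    ring
  have hsum : (∑ j ∈ Finset.Icc 1 (n / 2 - 1), (1 / Real.sin (2 * j * π / n)) ^ 3)
      = ∑ j ∈ Icc 1 (m-1), (1/Real.sin ((j:ℝ)*π/m))^3 := by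
    rw [hidx]
    exact Finset.sum_congr rfl hbody
  have hT : ((∑' k : ℕ, 1 / ((k : ℝ) + 1) ^ 3) / (4 * π ^ 3)) * (n:ℝ) ^ 3
      = 2*((m:ℝ)/π)^3 * (∑' k : ℕ, 1/((k:ℝ)+1)^3) := by
    rw [hnr, div_pow]
    field_simp
    ring
  rw [hsum, hT]
  refine (main_m m hm2).trans ?_
  -- numeric estimates
  have hlogm : Real.log ((m:ℕ):ℝ) ≤ Real.log n := by
    apply Real.log_le_log (by linarith)
    rw [hnr]; linarith
  have hlogn1 : (1:ℝ) ≤ Real.log n := by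
    have h4 : Real.log 4 ≤ Real.log n := by
      apply Real.log_le_log (by norm_num)
      exact_mod_cast hn
    have : (1.38:ℝ) < Real.log 4 := by
      have h2 : (0.6931471803:ℝ) < Real.log 2 := Real.log_two_gt_d9
      have : Real.log 4 = 2 * Real.log 2 := by
        rw [show (4:ℝ) = 2^2 by norm_num, Real.log_pow]
        push_cast; ring
      rw [this]; linarith
    linarith
  have hnpos : (0:ℝ) < n := by rw [hnr]; linarith
  have hlogpos : (0:ℝ) < Real.log n := by linarith
  have e1 : 20*(m:ℝ)/π * (1 + Real.log ((m:ℕ):ℝ)) ≤ 10*(n:ℝ)/π * (2 * Real.log n) := by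
    have h20 : 20*(m:ℝ)/π = 10*(n:ℝ)/π := by rw [hnr]; ring
    rw [h20]
    apply mul_le_mul_of_nonneg_left _ (by positivity)
    linarith
  have e2 : 10*(n:ℝ)/π * (2 * Real.log n) ≤ 7 * ((n:ℝ) * Real.log n) := by
    have : 10*(n:ℝ)/π * (2 * Real.log n) = (20/π) * ((n:ℝ) * Real.log n) := by ring
    rw [this]
    apply mul_le_mul_of_nonneg_right _ (by positivity)
    rw [div_le_iff₀ hπ]
    linarith
  have e3 : 4*(m:ℝ)/π^3 ≤ (n:ℝ) * Real.log n := by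
    have h1 : 4*(m:ℝ)/π^3 = 2*(n:ℝ)/π^3 := by rw [hnr]; ring
    rw [h1]
    have hπ2 : (9.8:ℝ) < π^2 := by nlinarith
    have hπ3 : (27:ℝ) ≤ π^3 := by nlinarith
    calc 2*(n:ℝ)/π^3 ≤ 2*(n:ℝ)/27 := by
          apply div_le_div_of_nonneg_left (by linarith) (by norm_num) hπ3
      _ ≤ (n:ℝ) := by linarith
      _ ≤ (n:ℝ) * Real.log n := le_mul_of_one_le_right hnpos.le hlogn1
  calc 20*(m:ℝ)/π * (1 + Real.log ((m:ℕ):ℝ)) + 4*(m:ℝ)/π^3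
      ≤ 7 * ((n:ℝ) * Real.log n) + (n:ℝ) * Real.log n := by
        linarith [e1.trans e2]
    _ ≤ 10 * (n:ℝ) * Real.log n := by nlinarith
end

section
/- For every even integer n ≥ 2 and every real φ with 0 < φ < 2π/n, the identity ∑_{j=0}^{n/2−1} csc(φ + 2jπ/n) = (n/π) ∫₀^∞ (tanh(nt/2)/sinh t)·cosh((nφ/π − 1)t) dt holds, where the integral on the right converges absolutely. -/
open MeasureTheory Real Set Finset

lemma beta_aux {p : ℝ} (hp0 : 0 < p) (hp1 : p < 1) :
    IntegrableOn (fun x : ℝ => x ^ (p - 1) * (1 - x) ^ (-p)) (Ioo 0 1) ∧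
    ∫ x in Ioo (0:ℝ) 1, x ^ (p - 1) * (1 - x) ^ (-p) = π / Real.sin (π * p) := by
  have h1p : 0 < 1 - p := by linarith
  have hc : ∀ x ∈ Ioo (0:ℝ) 1,
      ((x:ℂ) ^ ((p:ℂ) - 1) * ((1:ℂ) - x) ^ (((1-p:ℝ):ℂ) - 1)) =
        ((x ^ (p - 1) * (1 - x) ^ (-p) : ℝ) : ℂ) := by
    intro x hx
    have hx0 : (0:ℝ) ≤ x := hx.1.le
    have hx1 : (0:ℝ) ≤ 1 - x := by linarith [hx.2]
    rw [show ((p:ℂ) - 1) = ((p - 1 : ℝ) : ℂ) by push_cast; ring,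
        show (((1-p:ℝ):ℂ) - 1) = ((-p : ℝ) : ℂ) by push_cast; ring,
        show ((1:ℂ) - (x:ℂ)) = ((1 - x : ℝ) : ℂ) by push_cast; ring,
        ← Complex.ofReal_cpow hx0, ← Complex.ofReal_cpow hx1]
    push_cast
    ring
  have hbc := Complex.betaIntegral_convergent (u := (p:ℂ)) (v := ((1-p:ℝ):ℂ)) (by simpa) (by simpa)
  have hval : Complex.betaIntegral (p:ℂ) ((1-p:ℝ):ℂ) = ((π / Real.sin (π * p) : ℝ) : ℂ) := by
    have := Complex.Gamma_mul_Gamma_eq_betaIntegral (s := (p:ℂ)) (t := ((1-p:ℝ):ℂ))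
      (by simpa) (by simpa)
    rw [show ((p:ℂ) + ((1-p:ℝ):ℂ)) = 1 by push_cast; ring, Complex.Gamma_one, one_mul] at this
    rw [← this, show ((1-p:ℝ):ℂ) = 1 - (p:ℂ) by push_cast; ring,
      Complex.Gamma_mul_Gamma_one_sub]
    rw [Complex.ofReal_div, Complex.ofReal_sin]
    push_cast
    ring
  rw [intervalIntegrable_iff_integrableOn_Ioc_of_le (by norm_num)] at hbc
  have hbo : IntegrableOn (fun x : ℝ =>
      (x:ℂ) ^ ((p:ℂ) - 1) * ((1:ℂ) - x) ^ (((1-p:ℝ):ℂ) - 1)) (Ioo 0 1) :=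
    hbc.mono_set Ioo_subset_Ioc_self
  have hbo2 : IntegrableOn (fun x : ℝ =>
      ((x ^ (p - 1) * (1 - x) ^ (-p) : ℝ) : ℂ)) (Ioo 0 1) :=
    hbo.congr_fun hc measurableSet_Ioo
  have hint : IntegrableOn (fun x : ℝ => x ^ (p - 1) * (1 - x) ^ (-p)) (Ioo 0 1) := by
    have h := hbo2.re; simp at h; exact h
  refine ⟨hint, ?_⟩
  have h2 : Complex.betaIntegral (p:ℂ) ((1-p:ℝ):ℂ) =
      ((∫ x in Ioo (0:ℝ) 1, x ^ (p - 1) * (1 - x) ^ (-p) : ℝ) : ℂ) := by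
    rw [Complex.betaIntegral, intervalIntegral.integral_of_le (by norm_num : (0:ℝ) ≤ 1),
      integral_Ioc_eq_integral_Ioo, setIntegral_congr_fun measurableSet_Ioo hc]
    exact integral_ofReal
  rw [h2] at hval
  exact_mod_cast hval

lemma exp_cosh {a : ℝ} (ha1 : -1 < a) (ha2 : a < 1) :
    Integrable (fun t : ℝ => Real.exp (a * t) / Real.cosh t) ∧
    ∫ t : ℝ, Real.exp (a * t) / Real.cosh t = π / Real.cos (π * a / 2) := by
  set p : ℝ := (1 - a) / 2 with hp
  have hp0 : 0 < p := by simp only [hp]; linarith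
  have hp1 : p < 1 := by simp only [hp]; linarith
  obtain ⟨hbint, hbval⟩ := beta_aux hp0 hp1
  set g : ℝ → ℝ := fun x => x ^ (p - 1) * (1 - x) ^ (-p) with hg
  set σ : ℝ → ℝ := fun t => (1 + Real.exp (2 * t))⁻¹ with hσ
  set σ' : ℝ → ℝ := fun t => -(Real.exp (2 * t) * 2) / (1 + Real.exp (2 * t)) ^ 2 with hσ'
  have hEpos : ∀ t : ℝ, (0:ℝ) < 1 + Real.exp (2 * t) := fun t => by positivity
  have hderiv : ∀ t : ℝ, HasDerivAt σ (σ' t) t := by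
    intro t
    have h1 : HasDerivAt (fun t : ℝ => 2 * t) 2 t := by
      simpa using (hasDerivAt_id t).const_mul 2
    have h2 : HasDerivAt (fun t : ℝ => 1 + Real.exp (2 * t)) (Real.exp (2 * t) * 2) t :=
      (h1.exp).const_add 1
    exact h2.inv (hEpos t).ne'
  have hinj : InjOn σ univ := by
    intro x _ y _ hxy
    have h1 : (1 + Real.exp (2 * x)) = (1 + Real.exp (2 * y)) := inv_injective hxy
    have := Real.exp_injective (by linarith : Real.exp (2 * x) = Real.exp (2 * y))
    linarith
  have himg : σ '' univ = Set.Ioo 0 1 := by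
    ext x
    constructor
    · rintro ⟨t, -, rfl⟩
      exact ⟨by positivity, inv_lt_one_of_one_lt₀ (by linarith [Real.exp_pos (2*t)])⟩
    · rintro ⟨hx0, hx1⟩
      refine ⟨Real.log (x⁻¹ - 1) / 2, mem_univ _, ?_⟩
      have hx : (0:ℝ) < x⁻¹ - 1 := by
        have : 1 < x⁻¹ := (one_lt_inv₀ hx0).mpr hx1
        linarith
      simp only [hσ]
      rw [show 2 * (Real.log (x⁻¹ - 1) / 2) = Real.log (x⁻¹ - 1) by ring, Real.exp_log hx]
      field_simp
      ring
  have hpoint : ∀ t : ℝ, |σ' t| • g (σ t) = Real.exp (a * t) / Real.cosh t := by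
    intro t
    set u : ℝ := Real.exp t with hu
    have hu0 : 0 < u := Real.exp_pos t
    have hE : Real.exp (2 * t) = u ^ 2 := by
      rw [show (2:ℝ) * t = t + t by ring, Real.exp_add]; ring
    have h1u : (0:ℝ) < 1 + u ^ 2 := by positivity
    have hσt : σ t = (1 + u ^ 2)⁻¹ := by simp only [hσ, hE]
    have hσ't : |σ' t| = u ^ 2 * 2 / (1 + u ^ 2) ^ 2 := by
      simp only [hσ', hE]
      rw [abs_div, abs_neg, abs_of_nonneg (by positivity : (0:ℝ) ≤ u^2*2),
        abs_of_nonneg (by positivity : (0:ℝ) ≤ (1+u^2)^2)]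
    have h1mσ : 1 - σ t = u ^ 2 * (1 + u ^ 2)⁻¹ := by
      rw [hσt]; field_simp; ring
    have hu2 : (u ^ 2 : ℝ) ^ (-p : ℝ) = u ^ (a - 1 : ℝ) := by
      rw [← hE, ← Real.exp_mul, ← Real.exp_mul]
      congr 1
      simp only [hp]; ring
    have hgσ : g (σ t) = u ^ (a - 1 : ℝ) * (1 + u ^ 2) := by
      have hw : (0:ℝ) < (1 + u ^ 2)⁻¹ := by positivity
      simp only [hg]
      rw [h1mσ, hσt, Real.mul_rpow (by positivity) (by positivity), hu2,
        ← mul_assoc, mul_comm ((1 + u ^ 2)⁻¹ ^ (p - 1)) (u ^ (a - 1 : ℝ)), mul_assoc,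
        ← Real.rpow_add hw, show p - 1 + -p = (-1:ℝ) by ring, Real.rpow_neg_one, inv_inv]
    have hua : u ^ (a:ℝ) = u ^ (a - 1 : ℝ) * u := by
      rw [← Real.rpow_add_one hu0.ne' (a - 1)]; norm_num
    rw [smul_eq_mul, hσ't, hgσ, Real.cosh_eq, Real.exp_neg,
      show a * t = t * a by ring, Real.exp_mul, ← hu, hua]
    have h3 : u + u⁻¹ ≠ 0 := by positivity
    field_simp
    ring
  have key := integral_image_eq_integral_abs_deriv_smul MeasurableSet.univ
    (fun x _ => (hderiv x).hasDerivWithinAt) hinj g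
  have ikey := (integrableOn_image_iff_integrableOn_abs_deriv_smul MeasurableSet.univ
    (fun x _ => (hderiv x).hasDerivWithinAt) hinj g)
  rw [himg] at key ikey
  have hint : Integrable (fun t : ℝ => Real.exp (a * t) / Real.cosh t) := by
    rw [← integrableOn_univ]
    exact ((ikey.mp hbint).congr_fun (fun x _ => hpoint x) MeasurableSet.univ)
  refine ⟨hint, ?_⟩
  have hval : ∫ t : ℝ, Real.exp (a * t) / Real.cosh t = π / Real.sin (π * p) := by
    rw [← hbval, key, ← setIntegral_univ]
    exact setIntegral_congr_fun MeasurableSet.univ (fun x _ => (hpoint x).symm)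
  rw [hval, show π * p = π / 2 - π * a / 2 by simp only [hp]; ring, Real.sin_pi_div_two_sub]

lemma cosh_cosh {a : ℝ} (ha1 : -1 < a) (ha2 : a < 1) :
    IntegrableOn (fun t : ℝ => Real.cosh (a * t) / Real.cosh t) (Set.Ioi 0) ∧
    ∫ t in Set.Ioi (0:ℝ), Real.cosh (a * t) / Real.cosh t
      = π / (2 * Real.cos (π * a / 2)) := by
  obtain ⟨hi1, hv1⟩ := exp_cosh ha1 ha2
  obtain ⟨hi2, hv2⟩ := exp_cosh (a := -a) (by linarith) (by linarith)
  have heq : (fun t : ℝ => Real.cosh (a * t) / Real.cosh t)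
      = fun t : ℝ => (Real.exp (a * t) / Real.cosh t + Real.exp (-a * t) / Real.cosh t) / 2 := by
    funext t
    rw [Real.cosh_eq, show -(a * t) = -a * t by ring]
    ring
  have hint : IntegrableOn (fun t : ℝ => Real.cosh (a * t) / Real.cosh t) (Set.Ioi 0) := by
    rw [heq]
    exact ((hi1.integrableOn.add hi2.integrableOn).div_const 2)
  refine ⟨hint, ?_⟩
  have hrefl : ∫ t in Set.Iic (0:ℝ), Real.exp (a * t) / Real.cosh t
      = ∫ t in Set.Ioi (0:ℝ), Real.exp (-a * t) / Real.cosh t := by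
    have h := integral_comp_neg_Ioi (0:ℝ) (fun t => Real.exp (a * t) / Real.cosh t)
    rw [neg_zero] at h
    rw [← h]
    congr 1
    funext t
    rw [Real.cosh_neg, show a * -t = -a * t by ring]
  have hsplit : (∫ t in Set.Ioi (0:ℝ), Real.exp (a * t) / Real.cosh t)
      + ∫ t in Set.Ioi (0:ℝ), Real.exp (-a * t) / Real.cosh t = π / Real.cos (π * a / 2) := by
    rw [← hrefl, add_comm,
      intervalIntegral.integral_Iic_add_Ioi hi1.integrableOn hi1.integrableOn, hv1]
  rw [heq, integral_div, integral_add hi1.integrableOn hi2.integrableOn, hsplit]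
  ring

lemma tele (N : ℕ) (c u : ℝ) :
    ∑ j ∈ Finset.range N, Real.cosh (((N:ℝ) - 1 - 2*j - c) * u) * Real.sinh u
      = Real.cosh (c*u) * Real.sinh (N*u) := by
  set f : ℕ → ℝ := fun j => Real.sinh (((N:ℝ) - 2*j) * u) / 2 with hf
  set g : ℕ → ℝ := fun j => Real.cosh (((N:ℝ) - 2*j) * u) / 2 with hg
  have key : ∀ j : ℕ, Real.cosh (((N:ℝ) - 1 - 2*j - c) * u) * Real.sinh u
      = Real.cosh (c*u) * (f j - f (j+1)) - Real.sinh (c*u) * (g j - g (j+1)) := by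
    intro j
    simp only [hf, hg]
    push_cast
    rw [show ((N:ℝ) - 1 - 2*j - c) * u = (((N:ℝ)-1-2*(j:ℝ))*u) - c*u by ring,
        show ((N:ℝ) - 2*(j:ℝ)) * u = (((N:ℝ)-1-2*(j:ℝ))*u) + u by ring,
        show ((N:ℝ) - 2*((j:ℝ)+1)) * u = (((N:ℝ)-1-2*(j:ℝ))*u) - u by ring,
        Real.cosh_sub, Real.sinh_add, Real.sinh_sub, Real.cosh_add, Real.cosh_sub]
    ring
  rw [Finset.sum_congr rfl (fun j _ => key j), Finset.sum_sub_distrib, ← Finset.mul_sum,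
    ← Finset.mul_sum, Finset.sum_range_sub' f N, Finset.sum_range_sub' g N]
  simp only [hf, hg]
  push_cast
  rw [show ((N:ℝ) - 2*0) * u = (N:ℝ)*u by ring, show ((N:ℝ) - 2*(N:ℝ)) * u = -((N:ℝ)*u) by ring,
    Real.sinh_neg, Real.cosh_neg]
  ring

theorem csc_sum_integral_representation (n : ℕ) (hn : Even n) (hn2 : 2 ≤ n)
    (φ : ℝ) (hφ0 : 0 < φ) (hφ1 : φ < 2 * π / n) :
    IntegrableOn
      (fun t : ℝ => Real.tanh (n * t / 2) / Real.sinh t *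
        Real.cosh ((n * φ / π - 1) * t)) (Ioi 0) ∧
    (∑ j ∈ Finset.range (n / 2), 1 / Real.sin (φ + 2 * j * π / n)) =
      (n / π) * ∫ t in Ioi (0 : ℝ),
        Real.tanh (n * t / 2) / Real.sinh t * Real.cosh ((n * φ / π - 1) * t) := by
  have hπ : (0:ℝ) < π := Real.pi_pos
  set N : ℕ := n / 2 with hN
  have hNn : (n:ℝ) = 2 * (N:ℝ) := by
    rw [hN]
    have : n / 2 * 2 = n := Nat.div_mul_cancel hn.two_dvd
    exact_mod_cast (by omega : n = 2 * (n / 2))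
  have hN1 : 1 ≤ N := by omega
  have hNpos : (0:ℝ) < (N:ℝ) := by exact_mod_cast Nat.pos_of_ne_zero (by omega)
  have hn0 : (0:ℝ) < (n:ℝ) := by positivity
  set c : ℝ := (n:ℝ) * φ / π - 1 with hc
  set a : ℕ → ℝ := fun j => 1 - 2 * (φ + 2 * (j:ℝ) * π / (n:ℝ)) / π with ha
  set x : ℕ → ℝ := fun j => φ + 2 * (j:ℝ) * π / (n:ℝ) with hx
  have hx0 : ∀ j : ℕ, 0 < x j := by
    intro j
    have : (0:ℝ) ≤ 2 * (j:ℝ) * π / (n:ℝ) := by positivity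
    simp only [hx]; linarith
  have hxπ : ∀ j ∈ Finset.range N, x j < π := by
    intro j hj
    have hj' : (j:ℝ) ≤ (N:ℝ) - 1 := by
      have h1 : j + 1 ≤ N := Finset.mem_range.mp hj
      have : (j:ℝ) + 1 ≤ (N:ℝ) := by exact_mod_cast h1
      linarith
    have h2 : 2 * (j:ℝ) * π / (n:ℝ) ≤ 2 * ((N:ℝ) - 1) * π / (n:ℝ) := by
      gcongr
    have h3 : 2 * π / (n:ℝ) + 2 * ((N:ℝ) - 1) * π / (n:ℝ) = π := by
      rw [hNn, ← add_div, div_eq_iff (by positivity : (2*(N:ℝ)) ≠ 0)]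
      ring
    simp only [hx]
    linarith
  have ha1 : ∀ j ∈ Finset.range N, -1 < a j := by
    intro j hj
    have h := hxπ j hj
    simp only [hx] at h
    simp only [ha]
    have h2 : 2 * (φ + 2 * (j:ℝ) * π / (n:ℝ)) / π < 2 := by
      rw [div_lt_iff₀ hπ]
      linarith
    linarith
  have ha2 : ∀ j : ℕ, a j < 1 := by
    intro j
    have := hx0 j
    simp only [ha]
    simp only [hx] at this
    have : 0 < 2 * (φ + 2 * (j:ℝ) * π / (n:ℝ)) / π := by positivity
    linarith
  have hsin : ∀ j ∈ Finset.range N, 0 < Real.sin (x j) :=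
    fun j hj => Real.sin_pos_of_pos_of_lt_pi (hx0 j) (hxπ j hj)
  have hcos : ∀ j : ℕ, Real.cos (π * a j / 2) = Real.sin (x j) := by
    intro j
    have harg : π * a j / 2 = π / 2 - x j := by
      simp only [ha, hx]
      field_simp
    rw [harg, Real.cos_pi_div_two_sub]
  -- per-j integral on Ioi 0
  have hGj : ∀ j ∈ Finset.range N,
      IntegrableOn (fun t : ℝ => Real.cosh (a j * t) / Real.cosh t) (Ioi 0) ∧
      ∫ t in Ioi (0:ℝ), Real.cosh (a j * t) / Real.cosh t
        = π / (2 * Real.sin (x j)) := by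
    intro j hj
    obtain ⟨h1, h2⟩ := cosh_cosh (ha1 j hj) (ha2 j)
    rw [hcos j] at h2
    exact ⟨h1, h2⟩
  -- scaled versions
  have haj : ∀ j : ℕ, a j * (N:ℝ) = (N:ℝ) - 1 - 2 * (j:ℝ) - c := by
    intro j
    simp only [ha, hc, hNn]
    field_simp
    ring
  have hSint : ∀ j ∈ Finset.range N,
      IntegrableOn (fun u : ℝ => Real.cosh (a j * ((N:ℝ) * u)) / Real.cosh ((N:ℝ) * u))
        (Ioi 0) := by
    intro j hj
    have h := integrableOn_Ioi_comp_mul_left_iff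
      (fun t : ℝ => Real.cosh (a j * t) / Real.cosh t) 0 hNpos
    rw [mul_zero] at h
    exact h.mpr (hGj j hj).1
  have hSval : ∀ j ∈ Finset.range N,
      ∫ u in Ioi (0:ℝ), Real.cosh (a j * ((N:ℝ) * u)) / Real.cosh ((N:ℝ) * u)
        = π / (2 * (N:ℝ) * Real.sin (x j)) := by
    intro j hj
    have h := integral_comp_mul_left_Ioi
      (fun t : ℝ => Real.cosh (a j * t) / Real.cosh t) 0 hNpos
    rw [mul_zero] at h
    rw [h, (hGj j hj).2, smul_eq_mul]
    ring
  -- pointwise identity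
  have hpoint : ∀ u ∈ Ioi (0:ℝ),
      Real.tanh ((n:ℝ) * u / 2) / Real.sinh u * Real.cosh (c * u)
        = ∑ j ∈ Finset.range N,
            Real.cosh (a j * ((N:ℝ) * u)) / Real.cosh ((N:ℝ) * u) := by
    intro u hu
    have hu0 : (0:ℝ) < u := hu
    have hsu : 0 < Real.sinh u := by positivity
    have hcN : 0 < Real.cosh ((N:ℝ) * u) := Real.cosh_pos _
    have ht := tele N c u
    have hS : ∀ j ∈ Finset.range N,
        Real.cosh (a j * ((N:ℝ) * u)) / Real.cosh ((N:ℝ) * u)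
          = Real.cosh (((N:ℝ) - 1 - 2 * (j:ℝ) - c) * u) / Real.cosh ((N:ℝ) * u) := by
      intro j _
      congr 2
      rw [← mul_assoc, haj j]
    rw [Finset.sum_congr rfl hS, ← Finset.sum_div]
    have hsum2 : ∑ j ∈ Finset.range N, Real.cosh (((N:ℝ) - 1 - 2 * (j:ℝ) - c) * u)
        = Real.cosh (c * u) * Real.sinh ((N:ℝ) * u) / Real.sinh u := by
      rw [eq_div_iff hsu.ne', Finset.sum_mul]
      exact ht
    rw [hsum2, Real.tanh_eq_sinh_div_cosh, show (n:ℝ) * u / 2 = (N:ℝ) * u by rw [hNn]; ring]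
    field_simp
  -- assemble
  have hsum_int : IntegrableOn
      (fun u : ℝ => ∑ j ∈ Finset.range N,
        Real.cosh (a j * ((N:ℝ) * u)) / Real.cosh ((N:ℝ) * u)) (Ioi 0) :=
    integrable_finset_sum _ (fun j hj => hSint j hj)
  have hFint : IntegrableOn
      (fun t : ℝ => Real.tanh ((n:ℝ) * t / 2) / Real.sinh t * Real.cosh (c * t)) (Ioi 0) :=
    hsum_int.congr_fun (fun u hu => (hpoint u hu).symm) measurableSet_Ioi
  refine ⟨hFint, ?_⟩
  rw [setIntegral_congr_fun measurableSet_Ioi hpoint,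
    integral_finset_sum _ (fun j hj => hSint j hj)]
  rw [Finset.mul_sum]
  refine Finset.sum_congr rfl (fun j hj => ?_)
  rw [hSval j hj]
  have hsj : Real.sin (φ + 2 * (j:ℝ) * π / (n:ℝ)) = Real.sin (x j) := rfl
  rw [hsj]
  have hs0 : Real.sin (x j) ≠ 0 := (hsin j hj).ne'
  rw [hNn]
  field_simp
end
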